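/- arXiv:1011.5443 — 4 statements merged into one kernel-verified Lean document; each statement's English description precedes it below -/
import Mathlib

section
/- Let (V₁, V₂) be an (ε, p)-regular pair in a graph G, and let G' be a subgraph of G obtained by removing at most ε³p|V₁||V₂| of the edges between V₁ and V₂. Then (V₁, V₂) is (3ε, p)-regular in G'. -/
open Finset

open scoped Classical

noncomputable section

namespace RandomTriangle

/-- Number of ordered adjacent pairs between `X` and `Y`. -/
def eBtw {V : Type*} (G : SimpleGraph V) (X Y : Finset V) : ℕ :=
  ((X ×ˢ Y).filter fun a => G.Adj a.1 a.2).card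

/-- Edge density between `X` and `Y`. -/
def dens {V : Type*} (G : SimpleGraph V) (X Y : Finset V) : ℝ :=
  (eBtw G X Y : ℝ) / ((X.card : ℝ) * (Y.card : ℝ))

/-- Number of neighbours of `v` in `X`. -/
def degIn {V : Type*} (G : SimpleGraph V) (v : V) (X : Finset V) : ℕ :=
  (X.filter fun w => G.Adj v w).card

/-- Neighbourhood of `v` inside `X`. -/
def nbhdIn {V : Type*} (G : SimpleGraph V) (v : V) (X : Finset V) : Finset V :=
  X.filter fun w => G.Adj v w

/-- Number of common neighbours of `u` and `w` inside `X`. -/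
def codegIn {V : Type*} (G : SimpleGraph V) (u w : V) (X : Finset V) : ℕ :=
  (X.filter fun x => G.Adj u x ∧ G.Adj w x).card

/-- `(ε, p)`-regular pair `(X, Y)`. -/
def RegularPair {V : Type*} (G : SimpleGraph V) (ε p : ℝ) (X Y : Finset V) : Prop :=
  ∀ X' ⊆ X, ∀ Y' ⊆ Y, ε * X.card ≤ (X'.card : ℝ) → ε * Y.card ≤ (Y'.card : ℝ) →
    |dens G X Y - dens G X' Y'| ≤ ε * p

/-- `(ε, p)`-regular triple. -/
def RegularTriple {V : Type*} (G : SimpleGraph V) (ε p : ℝ) (V₁ V₂ V₃ : Finset V) : Prop :=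
  RegularPair G ε p V₁ V₂ ∧ RegularPair G ε p V₁ V₃ ∧ RegularPair G ε p V₂ V₃

/-- `v ∈ V₁` is an `ε`-typical vertex of the triple `(V₁, V₂, V₃)`:
its neighbourhoods in `V₂`, `V₃` have the expected size `(1 ± ε)·d₁ᵢp|Vᵢ|`
(note `d₁ᵢ p = dens G V₁ Vᵢ`), and they contain large subsets forming an
`(ε, p)`-regular pair of density `(1 ± ε)·d₂₃p`. -/
def TypicalVertex {V : Type*} (G : SimpleGraph V) (ε p : ℝ) (V₁ V₂ V₃ : Finset V) (v : V) :
    Prop :=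
  ((1 - ε) * (dens G V₁ V₂ * V₂.card) ≤ ((nbhdIn G v V₂).card : ℝ) ∧
    ((nbhdIn G v V₂).card : ℝ) ≤ (1 + ε) * (dens G V₁ V₂ * V₂.card)) ∧
  ((1 - ε) * (dens G V₁ V₃ * V₃.card) ≤ ((nbhdIn G v V₃).card : ℝ) ∧
    ((nbhdIn G v V₃).card : ℝ) ≤ (1 + ε) * (dens G V₁ V₃ * V₃.card)) ∧
  ∃ N₂' ⊆ nbhdIn G v V₂, ∃ N₃' ⊆ nbhdIn G v V₃,
    (1 - ε) * ((nbhdIn G v V₂).card : ℝ) ≤ (N₂'.card : ℝ) ∧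
    (1 - ε) * ((nbhdIn G v V₃).card : ℝ) ≤ (N₃'.card : ℝ) ∧
    RegularPair G ε p N₂' N₃' ∧
    (1 - ε) * dens G V₂ V₃ ≤ dens G N₂' N₃' ∧
    dens G N₂' N₃' ≤ (1 + ε) * dens G V₂ V₃

/-- An `ε`-typical triple: `(ε,p)`-regular and in each part all but at most an
`ε`-fraction of the vertices are `ε`-typical. -/
def TypicalTriple {V : Type*} (G : SimpleGraph V) (ε p : ℝ) (V₁ V₂ V₃ : Finset V) : Prop :=
  RegularTriple G ε p V₁ V₂ V₃ ∧
  ((V₁.filter fun v => ¬ TypicalVertex G ε p V₁ V₂ V₃ v).card : ℝ) ≤ ε * V₁.card ∧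
  ((V₂.filter fun v => ¬ TypicalVertex G ε p V₂ V₁ V₃ v).card : ℝ) ≤ ε * V₂.card ∧
  ((V₃.filter fun v => ¬ TypicalVertex G ε p V₃ V₁ V₂ v).card : ℝ) ≤ ε * V₃.card

/-- A `(δ, ε, p)`-super-regular triple. -/
def SuperRegularTriple {V : Type*} (G : SimpleGraph V) (δ ε p : ℝ) (V₁ V₂ V₃ : Finset V) :
    Prop :=
  RegularTriple G ε p V₁ V₂ V₃ ∧
  δ * p ≤ dens G V₁ V₂ ∧ δ * p ≤ dens G V₁ V₃ ∧ δ * p ≤ dens G V₂ V₃ ∧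
  (∀ v ∈ V₁, TypicalVertex G ε p V₁ V₂ V₃ v) ∧
  (∀ v ∈ V₂, TypicalVertex G ε p V₂ V₁ V₃ v) ∧
  (∀ v ∈ V₃, TypicalVertex G ε p V₃ V₁ V₂ v)

/-- An edge `(u, w)` with `u ∈ V₂`, `w ∈ V₃` is `ε`-good (w.r.t. `V₁`) if its endpoints
have at least `(1 - ε)·d₁₂d₁₃p²|V₁|` common neighbours in `V₁`
(note `d₁₂d₁₃p² = dens G V₁ V₂ * dens G V₁ V₃`). -/
def GoodEdge {V : Type*} (G : SimpleGraph V) (ε : ℝ) (V₁ V₂ V₃ : Finset V) (u w : V) : Prop :=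
  (1 - ε) * (dens G V₁ V₂ * dens G V₁ V₃ * V₁.card) ≤ (codegIn G u w V₁ : ℝ)

/-- An `ε`-typical vertex `v ∈ V₁` is `ε`-good if the pair of its neighbourhoods in
`V₂`, `V₃` spans at most `ε·d₁₂d₁₃d₂₃p³|V₂||V₃|` edges that are not `ε`-good. -/
def GoodVertex {V : Type*} (G : SimpleGraph V) (ε p : ℝ) (V₁ V₂ V₃ : Finset V) (v : V) :
    Prop :=
  TypicalVertex G ε p V₁ V₂ V₃ v ∧
  ((((nbhdIn G v V₂) ×ˢ (nbhdIn G v V₃)).filter fun uw =>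
      G.Adj uw.1 uw.2 ∧ ¬ GoodEdge G ε V₁ V₂ V₃ uw.1 uw.2).card : ℝ) ≤
    ε * (dens G V₁ V₂ * dens G V₁ V₃ * dens G V₂ V₃ * V₂.card * V₃.card)

/-- A `(δ, ε, p)`-strong-super-regular triple. -/
def StrongSuperRegularTriple {V : Type*} (G : SimpleGraph V) (δ ε p : ℝ)
    (V₁ V₂ V₃ : Finset V) : Prop :=
  SuperRegularTriple G δ ε p V₁ V₂ V₃ ∧
  (∀ v ∈ V₁, GoodVertex G ε p V₁ V₂ V₃ v) ∧
  (∀ v ∈ V₂, GoodVertex G ε p V₂ V₁ V₃ v) ∧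
  (∀ v ∈ V₃, GoodVertex G ε p V₃ V₁ V₂ v)

/-- A triangle packing: a collection of pairwise vertex-disjoint triangles of `G`. -/
def IsTrianglePacking {V : Type*} [DecidableEq V] (G : SimpleGraph V)
    (T : Finset (Finset V)) : Prop :=
  (∀ t ∈ T, t.card = 3 ∧ ∀ x ∈ t, ∀ y ∈ t, x ≠ y → G.Adj x y) ∧
  (∀ s ∈ T, ∀ t ∈ T, s ≠ t → Disjoint s t)

def idx0 {k : ℕ} (t : Fin k) : Fin (3 * k) := ⟨3 * t.1, by have := t.2; omega⟩
def idx1 {k : ℕ} (t : Fin k) : Fin (3 * k) := ⟨3 * t.1 + 1, by have := t.2; omega⟩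
def idx2 {k : ℕ} (t : Fin k) : Fin (3 * k) := ⟨3 * t.1 + 2, by have := t.2; omega⟩

/-- The endpoints of every edge between `A` and `B` have at most `4|C|p²` common
neighbours in `C`. -/
def CodegBound {V : Type*} (G : SimpleGraph V) (p : ℝ) (A B C : Finset V) : Prop :=
  ∀ u ∈ A, ∀ w ∈ B, G.Adj u w → (codegIn G u w C : ℝ) ≤ 4 * C.card * p ^ 2

/-- The probability, in the Erdős–Rényi random graph `G(n, p)`, of the event `A`. -/
def gnpProb (n : ℕ) (p : ℝ) (A : Set (SimpleGraph (Fin n))) : ℝ :=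
  ∑ G ∈ Finset.univ.filter (fun G => G ∈ A),
    p ^ ((Finset.univ.filter fun e : Sym2 (Fin n) => e ∈ G.edgeSet).card) *
      (1 - p) ^ (n.choose 2 - (Finset.univ.filter fun e : Sym2 (Fin n) => e ∈ G.edgeSet).card)

/-- A sequence of graph properties holds asymptotically almost surely in `G(n, p n)`. -/
def AAS (p : ℕ → ℝ) (P : ∀ n : ℕ, SimpleGraph (Fin n) → Prop) : Prop :=
  Filter.Tendsto (fun n => gnpProb n (p n) {G | P n G}) Filter.atTop (nhds 1)

end RandomTriangle

open RandomTriangle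

lemma eBtw_split {V : Type*} (G G' : SimpleGraph V) (hsub : G' ≤ G) (X Y : Finset V) :
    eBtw G X Y = eBtw G' X Y +
      ((X ×ˢ Y).filter fun a => G.Adj a.1 a.2 ∧ ¬ G'.Adj a.1 a.2).card := by
  classical
  unfold eBtw
  rw [← Finset.card_filter_add_card_filter_not
    (s := (X ×ˢ Y).filter fun a => G.Adj a.1 a.2) (p := fun a => G'.Adj a.1 a.2)]
  congr 1
  · rw [Finset.filter_filter]
    apply congrArg
    apply Finset.filter_congr
    intro a _
    exact ⟨fun h => h.2, fun h => ⟨hsub h, h⟩⟩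
  · rw [Finset.filter_filter]

lemma eBtw_diff_mono {V : Type*} (G G' : SimpleGraph V) (hsub : G' ≤ G)
    {X' Y' X Y : Finset V} (hX : X' ⊆ X) (hY : Y' ⊆ Y) :
    (eBtw G X' Y' : ℝ) - eBtw G' X' Y' ≤ (eBtw G X Y : ℝ) - eBtw G' X Y := by
  classical
  rw [eBtw_split G G' hsub X Y, eBtw_split G G' hsub X' Y']
  push_cast
  have : (((X' ×ˢ Y').filter fun a => G.Adj a.1 a.2 ∧ ¬ G'.Adj a.1 a.2).card : ℝ)
      ≤ ((X ×ˢ Y).filter fun a => G.Adj a.1 a.2 ∧ ¬ G'.Adj a.1 a.2).card := by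
    exact_mod_cast Finset.card_le_card
      (Finset.filter_subset_filter _ (Finset.product_subset_product hX hY))
  linarith

lemma eBtw_mono_sub {V : Type*} (G G' : SimpleGraph V) (hsub : G' ≤ G) (X Y : Finset V) :
    (eBtw G' X Y : ℝ) ≤ eBtw G X Y := by
  have : eBtw G' X Y ≤ eBtw G X Y := by
    apply Finset.card_le_card
    apply Finset.monotone_filter_right
    intro a _ h
    exact hsub h
  exact_mod_cast this

/-- **Proposition (regularity after edge deletion).** If `(V₁,V₂)` is `(ε,p)`-regular in `G`
and `G' ≤ G` is obtained by removing at most `ε³p|V₁||V₂|` of the edges between `V₁` and `V₂`,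
then `(V₁,V₂)` is `(3ε,p)`-regular in `G'`. -/
theorem stmt_3 {V : Type*} [Fintype V] [DecidableEq V] (G G' : SimpleGraph V)
    (ε p : ℝ) (hε : 0 < ε) (hp : 0 < p)
    (V₁ V₂ : Finset V) (hdisj : Disjoint V₁ V₂)
    (hreg : RegularPair G ε p V₁ V₂)
    (hsub : G' ≤ G)
    (hdel : (eBtw G V₁ V₂ : ℝ) - (eBtw G' V₁ V₂ : ℝ) ≤ ε ^ 3 * p * V₁.card * V₂.card) :
    RegularPair G' (3 * ε) p V₁ V₂ := by
  intro X' hX' Y' hY' hXc hYc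
  by_cases h1 : V₁ = ∅
  · subst h1
    have : X' = ∅ := Finset.subset_empty.mp hX'
    subst this
    simp only [RandomTriangle.dens, Finset.card_empty, Nat.cast_zero, zero_mul, div_zero, sub_zero,
      abs_zero]
    positivity
  by_cases h2 : V₂ = ∅
  · subst h2
    have : Y' = ∅ := Finset.subset_empty.mp hY'
    subst this
    simp only [RandomTriangle.dens, Finset.card_empty, Nat.cast_zero, mul_zero, div_zero, sub_zero,
      abs_zero]
    positivity
  have hn1 : (0 : ℝ) < V₁.card := by
    exact_mod_cast Finset.card_pos.mpr (Finset.nonempty_of_ne_empty h1)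
  have hn2 : (0 : ℝ) < V₂.card := by
    exact_mod_cast Finset.card_pos.mpr (Finset.nonempty_of_ne_empty h2)
  have hXle : (X'.card : ℝ) ≤ V₁.card := by exact_mod_cast Finset.card_le_card hX'
  have hYle : (Y'.card : ℝ) ≤ V₂.card := by exact_mod_cast Finset.card_le_card hY'
  have hε3 : ε ≤ 1 / 3 := by nlinarith
  have hx : (0 : ℝ) < X'.card := by nlinarith
  have hy : (0 : ℝ) < Y'.card := by nlinarith
  -- regularity of G on X', Y'
  have hregXY : |RandomTriangle.dens G V₁ V₂ - RandomTriangle.dens G X' Y'| ≤ ε * p := by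
    apply hreg X' hX' Y' hY' (by nlinarith) (by nlinarith)
  -- deleted edges on V₁ V₂
  have hdel0 : (0 : ℝ) ≤ (eBtw G V₁ V₂ : ℝ) - eBtw G' V₁ V₂ := by
    have := eBtw_mono_sub G G' hsub V₁ V₂; linarith
  have hdelX : (eBtw G X' Y' : ℝ) - eBtw G' X' Y' ≤ ε ^ 3 * p * V₁.card * V₂.card :=
    le_trans (eBtw_diff_mono G G' hsub hX' hY') hdel
  have hdelX0 : (0 : ℝ) ≤ (eBtw G X' Y' : ℝ) - eBtw G' X' Y' := by
    have := eBtw_mono_sub G G' hsub X' Y'; linarith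
  -- density differences
  have hd1 : RandomTriangle.dens G V₁ V₂ - RandomTriangle.dens G' V₁ V₂ ≤ ε ^ 3 * p ∧
      0 ≤ RandomTriangle.dens G V₁ V₂ - RandomTriangle.dens G' V₁ V₂ := by
    unfold RandomTriangle.dens
    rw [div_sub_div_same]
    constructor
    · rw [div_le_iff₀ (by positivity)]
      calc (eBtw G V₁ V₂ : ℝ) - eBtw G' V₁ V₂ ≤ ε ^ 3 * p * V₁.card * V₂.card := hdel
        _ = ε ^ 3 * p * ((V₁.card : ℝ) * V₂.card) := by ring
    · exact div_nonneg hdel0 (by positivity)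
  have hd2 : RandomTriangle.dens G X' Y' - RandomTriangle.dens G' X' Y' ≤ ε * p / 9 ∧
      0 ≤ RandomTriangle.dens G X' Y' - RandomTriangle.dens G' X' Y' := by
    unfold RandomTriangle.dens
    rw [div_sub_div_same]
    constructor
    · rw [div_le_iff₀ (by positivity)]
      have h30 : (0:ℝ) ≤ 3 * ε * V₂.card := by positivity
      have h9 : (3 * ε * V₁.card) * (3 * ε * V₂.card) ≤ (X'.card : ℝ) * Y'.card :=
        mul_le_mul hXc hYc h30 hx.le
      have heq : (3 * ε * (V₁.card:ℝ)) * (3 * ε * V₂.card)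
          = 9 * ε ^ 2 * (V₁.card * V₂.card) := by ring
      rw [heq] at h9
      calc (eBtw G X' Y' : ℝ) - eBtw G' X' Y' ≤ ε ^ 3 * p * V₁.card * V₂.card := hdelX
        _ = ε * p / 9 * (9 * ε ^ 2 * (V₁.card * V₂.card)) := by ring
        _ ≤ ε * p / 9 * ((X'.card : ℝ) * Y'.card) :=
            mul_le_mul_of_nonneg_left h9 (by positivity)
    · exact div_nonneg hdelX0 (by positivity)
  have habs := abs_le.mp hregXY
  have hcube : ε ^ 3 * p ≤ ε * p / 9 := by
    have hsq : ε * ε ≤ 1 / 3 * (1 / 3) := mul_le_mul hε3 hε3 hε.le (by norm_num)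
    nlinarith [mul_pos hε hp]
  rw [abs_le]
  constructor
  · linarith [hd1.1, hd1.2, hd2.1, hd2.2, habs.1, habs.2]
  · linarith [hd1.1, hd1.2, hd2.1, hd2.2, habs.1, habs.2]
end
end

section
/- For every positive α, δ, and p, there exists ε = ε(α, δ) > 0 such that every ε-typical (ε, p)-regular triple (V₁, V₂, V₃) in which each of the three pairwise densities is at least δp contains at least (1 − α)·min{|V₁|, |V₂|, |V₃|} vertex-disjoint triangles. -/
open Finset

open scoped Classical

noncomputable section

open RandomTriangle

set_option linter.unusedSectionVars false
section Aux
variable {V : Type} [Fintype V] [DecidableEq V] (G : SimpleGraph V)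

lemma dens_nonneg (X Y : Finset V) : 0 ≤ dens G X Y := by
  rw [RandomTriangle.dens]; positivity

lemma eBtw_eq_sum (X Y : Finset V) :
    eBtw G X Y = ∑ v ∈ X, (Y.filter fun w => G.Adj v w).card := by
  classical
  rw [eBtw, Finset.card_filter, Finset.sum_product]
  exact Finset.sum_congr rfl fun x _ => (Finset.card_filter _ _).symm

lemma card_pos_of_dens_pos {X Y : Finset V} (h : 0 < dens G X Y) :
    0 < X.card ∧ 0 < Y.card := by
  constructor <;> rw [Nat.pos_iff_ne_zero] <;> intro h0 <;>
    simp only [RandomTriangle.dens, h0] at h <;> norm_num at h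

lemma exists_edge {X Y : Finset V} (h : 0 < dens G X Y) :
    ∃ u ∈ X, ∃ w ∈ Y, G.Adj u w := by
  have he : eBtw G X Y ≠ 0 := by
    intro h0; simp only [RandomTriangle.dens, h0] at h; norm_num at h
  obtain ⟨⟨u, w⟩, hm⟩ := Finset.card_pos.mp (Nat.pos_of_ne_zero he)
  rw [Finset.mem_filter, Finset.mem_product] at hm
  exact ⟨u, hm.1.1, w, hm.1.2, hm.2⟩

lemma eBtw_cast {X Y : Finset V} (hX : X.card ≠ 0) (hY : Y.card ≠ 0) :
    (eBtw G X Y : ℝ) = dens G X Y * (X.card * Y.card) := by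
  rw [RandomTriangle.dens]
  have hX' : (X.card : ℝ) ≠ 0 := Nat.cast_ne_zero.mpr hX
  have hY' : (Y.card : ℝ) ≠ 0 := Nat.cast_ne_zero.mpr hY
  field_simp

lemma arith_final (ε δ β m r : ℝ) (hε : 0 < ε) (hεβδ : 8*ε ≤ β*δ) (hεβ : 8*ε ≤ β)
    (hβ : 0 < β) (hδ : 0 < δ) (hm : 0 < m)
    (key2 : δ*((1-2*ε)*((1-ε)*m)) ≤ (δ+ε)*r) : (1-β)*m < r := by
  have hpoly : (1-β)*(δ+ε) < δ*((1-2*ε)*(1-ε)) := by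
    nlinarith [mul_le_mul_of_nonneg_right hεβ hδ.le, mul_nonneg hβ.le hε.le,
      mul_nonneg (mul_nonneg hε.le hε.le) hδ.le]
  have hδε : (0:ℝ) < δ+ε := by linarith
  nlinarith [mul_lt_mul_of_pos_right hpoly hm]

lemma arith_neg (ε D m r f n : ℝ) (hε : 0 < ε) (hε8 : ε ≤ 1/8) (hD4 : 4*ε ≤ D)
    (hm : 0 < m) (ha : (1-ε)*(D*m) ≤ n) (hb : (1-2*ε)*n < f) (hfR : f ≤ r)
    (hcase : r < ε*m) : False := by
  have h2ε : (0:ℝ) ≤ 1 - 2*ε := by linarith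
  have h1 : (1-2*ε)*((1-ε)*(D*m)) < ε*m := by
    linarith [mul_le_mul_of_nonneg_left ha h2ε]
  have hDm : 4*ε*m ≤ D*m := mul_le_mul_of_nonneg_right hD4 hm.le
  have hq : (21/32:ℝ) ≤ (1-2*ε)*(1-ε) := by nlinarith
  have h3 : (21/32:ℝ) * (4*ε*m) ≤ ((1-2*ε)*(1-ε))*(D*m) :=
    mul_le_mul hq hDm (by positivity) (by nlinarith)
  nlinarith [mul_pos hε hm]

lemma side_bound (ε p δ β : ℝ) (V₁ V₂ : Finset V)
    (hε : 0 < ε) (hε8 : ε ≤ 1/8) (hεδp : 4*ε ≤ δ*p) (hεβδ : 8*ε ≤ β*δ) (hεβ : 8*ε ≤ β)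
    (hβ : 0 < β) (hδ : 0 < δ) (hp : 0 < p)
    (hm₂ : 0 < (V₂.card : ℝ))
    (hreg : RegularPair G ε p V₁ V₂) (hd : δ*p ≤ dens G V₁ V₂)
    (R B : Finset V) (hR : R ⊆ V₂) (hB : B ⊆ V₁)
    (hBlow : ε * V₁.card ≤ (B.card : ℝ)) (hBne : B.Nonempty)
    (hbad : ∀ v ∈ B,
      (1-ε) * (dens G V₁ V₂ * V₂.card) ≤ ((nbhdIn G v V₂).card : ℝ) ∧
      (1-2*ε) * ((nbhdIn G v V₂).card : ℝ) < ((R.filter fun w => G.Adj v w).card : ℝ)) :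
    (1-β) * V₂.card < (R.card : ℝ) := by
  set D := dens G V₁ V₂ with hD
  have hDpos : 0 < D := lt_of_lt_of_le (by positivity) hd
  by_cases hcase : ε * V₂.card ≤ (R.card : ℝ)
  · have hRpos : (0:ℝ) < R.card := lt_of_lt_of_le (by positivity) hcase
    have hBpos : (0:ℝ) < B.card := by exact_mod_cast Finset.card_pos.mpr hBne
    have hregBR := hreg B hB R hR hBlow hcase
    have hdub : dens G B R ≤ D + ε * p := by
      have h1 := (abs_le.mp hregBR).1
      linarith
    have hsum : (B.card : ℝ) * ((1-2*ε) * ((1-ε) * (D * V₂.card))) ≤ (eBtw G B R : ℝ) := by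
      have h1 : ∀ v ∈ B, (1-2*ε) * ((1-ε) * (D * V₂.card))
          ≤ ((R.filter fun w => G.Adj v w).card : ℝ) := by
        intro v hv
        obtain ⟨ha, hb⟩ := hbad v hv
        have h2ε : (0:ℝ) ≤ 1 - 2*ε := by linarith
        nlinarith
      have h2 : (eBtw G B R : ℝ) = ∑ v ∈ B, ((R.filter fun w => G.Adj v w).card : ℝ) := by
        rw [eBtw_eq_sum]; push_cast; rfl
      rw [h2]
      calc (B.card : ℝ) * ((1-2*ε) * ((1-ε) * (D * V₂.card)))
          = ∑ _v ∈ B, ((1-2*ε) * ((1-ε) * (D * V₂.card))) := by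
            rw [Finset.sum_const, nsmul_eq_mul]
        _ ≤ _ := Finset.sum_le_sum h1
    have hub : (eBtw G B R : ℝ) ≤ (D + ε*p) * (B.card * R.card) := by
      rw [eBtw_cast G (Nat.cast_pos.mp hBpos).ne' (Nat.cast_pos.mp hRpos).ne']
      have := mul_pos hBpos hRpos
      nlinarith [dens_nonneg G B R]
    have hstep : (1-2*ε)*((1-ε)*(D*V₂.card)) ≤ (D+ε*p)*R.card := by
      have h' : (B.card:ℝ) * ((1-2*ε)*((1-ε)*(D*V₂.card)))
          ≤ (B.card:ℝ) * ((D+ε*p)*R.card) := by nlinarith [le_trans hsum hub]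
      exact le_of_mul_le_mul_left h' hBpos
    have hδεp : ε*(δ*p) ≤ ε*D := mul_le_mul_of_nonneg_left hd hε.le
    have key2 : δ*((1-2*ε)*((1-ε)*V₂.card)) ≤ (δ+ε)*R.card := by
      have h1 : δ*((1-2*ε)*((1-ε)*(D*V₂.card))) ≤ δ*((D+ε*p)*R.card) :=
        mul_le_mul_of_nonneg_left hstep hδ.le
      have h2 : δ*((D+ε*p)*R.card) ≤ D*((δ+ε)*R.card) := by
        nlinarith [mul_le_mul_of_nonneg_right hδεp hRpos.le]
      have h3 : D*(δ*((1-2*ε)*((1-ε)*V₂.card))) ≤ D*((δ+ε)*R.card) := by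
        nlinarith [le_trans h1 h2]
      exact le_of_mul_le_mul_left h3 hDpos
    exact arith_final ε δ β _ _ hε hεβδ hεβ hβ hδ hm₂ key2
  · exfalso
    push_neg at hcase
    obtain ⟨v, hv⟩ := hBne
    obtain ⟨ha, hb⟩ := hbad v hv
    have hfR : ((R.filter fun w => G.Adj v w).card : ℝ) ≤ (R.card : ℝ) := by
      exact_mod_cast Finset.card_le_card (Finset.filter_subset _ _)
    exact arith_neg ε D V₂.card R.card _ _ hε hε8 (le_trans hεδp hd) hm₂ ha hb hfR hcase

lemma arith_S (ε sdf i n n2 : ℝ) (hε : 0 < ε) (hsp : sdf + i = n2)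
    (h1 : i ≤ (1-2*ε)*n) (h2 : n2 ≤ n) (hlo : (1-ε)*n ≤ n2) : ε*n2 ≤ sdf := by
  nlinarith [mul_nonneg hε.le (sub_nonneg.mpr h2)]

lemma arith_dens (ε δ p dN dS d23 : ℝ) (hδ : 0 < δ) (hp : 0 < p) (hε8 : ε ≤ 1/8)
    (hεδ : 4*ε ≤ δ) (hd23 : δ*p ≤ d23) (hdloc : (1-ε)*d23 ≤ dN)
    (habs : dN - dS ≤ ε*p) : 0 < dS := by
  nlinarith [mul_le_mul_of_nonneg_right hε8 (mul_pos hδ hp).le,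
    mul_le_mul_of_nonneg_right hεδ hp.le, mul_pos hδ hp]

lemma tri_inter (v u w : V) (W : Finset V) (hv : v ∈ W) (hu : u ∉ W) (hw : w ∉ W) :
    (({v, u, w} : Finset V) ∩ W) = {v} := by
  ext x
  simp only [Finset.mem_inter, Finset.mem_insert, Finset.mem_singleton]
  constructor
  · rintro ⟨rfl | rfl | rfl, hxW⟩
    · rfl
    · exact absurd hxW hu
    · exact absurd hxW hw
  · rintro rfl
    exact ⟨Or.inl rfl, hv⟩

end Aux


/-- **Proposition (almost perfect packing in typical triples).** For every positive `α`, `δ`,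
`p` there exists `ε(α,δ) > 0` such that every `ε`-typical `(ε,p)`-regular triple of minimum
density at least `δp` contains `(1-α)·minᵢ|Vᵢ|` vertex-disjoint triangles. -/
theorem stmt_4 (α δ p : ℝ) (hα : 0 < α) (hδ : 0 < δ) (hp : 0 < p) :
    ∃ ε : ℝ, 0 < ε ∧
      ∀ (V : Type) [Fintype V] [DecidableEq V] (G : SimpleGraph V)
        (V₁ V₂ V₃ : Finset V),
        Disjoint V₁ V₂ → Disjoint V₁ V₃ → Disjoint V₂ V₃ →
        TypicalTriple G ε p V₁ V₂ V₃ →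
        δ * p ≤ dens G V₁ V₂ → δ * p ≤ dens G V₁ V₃ → δ * p ≤ dens G V₂ V₃ →
        ∃ T : Finset (Finset V), IsTrianglePacking G T ∧
          (∀ t ∈ T, (t ∩ V₁).card = 1 ∧ (t ∩ V₂).card = 1 ∧ (t ∩ V₃).card = 1) ∧
          (1 - α) * (min (V₁.card : ℝ) (min (V₂.card : ℝ) (V₃.card : ℝ))) ≤ (T.card : ℝ) := by
  have hβ0 : (0:ℝ) < min α (1/2) := lt_min hα (by norm_num)
  set β : ℝ := min α (1/2) with hβdef
  have hβα : β ≤ α := min_le_left _ _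
  have hβ2 : β ≤ 1/2 := min_le_right _ _
  have hεpos : (0:ℝ) < min (β*δ/8) (min (β/8) (min (δ*p/4) (δ/4))) :=
    lt_min (by positivity) (lt_min (by positivity) (lt_min (by positivity) (by positivity)))
  set ε : ℝ := min (β*δ/8) (min (β/8) (min (δ*p/4) (δ/4))) with hεdef
  have hε : 0 < ε := hεpos
  have hεβδ : 8*ε ≤ β*δ := by
    have h := min_le_left (β*δ/8) (min (β/8) (min (δ*p/4) (δ/4))); rw [← hεdef] at h; linarith
  have hεβ : 8*ε ≤ β := by
    have h := le_trans (min_le_right (β*δ/8) (min (β/8) (min (δ*p/4) (δ/4))))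
      (min_le_left (β/8) (min (δ*p/4) (δ/4)))
    rw [← hεdef] at h; linarith
  have hεδp : 4*ε ≤ δ*p := by
    have h := le_trans (min_le_right (β*δ/8) (min (β/8) (min (δ*p/4) (δ/4))))
      (le_trans (min_le_right (β/8) (min (δ*p/4) (δ/4))) (min_le_left (δ*p/4) (δ/4)))
    rw [← hεdef] at h; linarith
  have hεδ : 4*ε ≤ δ := by
    have h := le_trans (min_le_right (β*δ/8) (min (β/8) (min (δ*p/4) (δ/4))))
      (le_trans (min_le_right (β/8) (min (δ*p/4) (δ/4))) (min_le_right (δ*p/4) (δ/4)))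
    rw [← hεdef] at h; linarith
  have hε8 : ε ≤ 1/8 := by linarith
  refine ⟨ε, hε, ?_⟩
  intro V _ _ G V₁ V₂ V₃ h12 h13 h23 htt hd12 hd13 hd23
  obtain ⟨⟨hreg12, hreg13, hreg23⟩, hty1, hty2, hty3⟩ := htt
  have hd12pos : 0 < dens G V₁ V₂ := lt_of_lt_of_le (by positivity) hd12
  have hd13pos : 0 < dens G V₁ V₃ := lt_of_lt_of_le (by positivity) hd13
  have hd23pos : 0 < dens G V₂ V₃ := lt_of_lt_of_le (by positivity) hd23
  obtain ⟨hm1, hm2⟩ := card_pos_of_dens_pos G hd12pos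
  obtain ⟨-, hm3⟩ := card_pos_of_dens_pos G hd13pos
  have hm1R : (0:ℝ) < V₁.card := by exact_mod_cast hm1
  have hm2R : (0:ℝ) < V₂.card := by exact_mod_cast hm2
  have hm3R : (0:ℝ) < V₃.card := by exact_mod_cast hm3
  set m : ℝ := min (V₁.card:ℝ) (min (V₂.card:ℝ) (V₃.card:ℝ)) with hmdef
  have hm0 : 0 < m := lt_min hm1R (lt_min hm2R hm3R)
  have hmm1 : m ≤ V₁.card := min_le_left _ _
  have hmm2 : m ≤ V₂.card := le_trans (min_le_right _ _) (min_le_left _ _)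
  have hmm3 : m ≤ V₃.card := le_trans (min_le_right _ _) (min_le_right _ _)
  have hPne : ((Finset.univ : Finset (Finset (Finset V))).filter
      (fun T => IsTrianglePacking G T ∧
        ∀ t ∈ T, (t ∩ V₁).card = 1 ∧ (t ∩ V₂).card = 1 ∧ (t ∩ V₃).card = 1)).Nonempty :=
    ⟨∅, Finset.mem_filter.mpr ⟨Finset.mem_univ _, ⟨⟨by simp, by simp⟩, by simp⟩⟩⟩
  obtain ⟨T, hTmem, hmax⟩ := Finset.exists_max_image _ Finset.card hPne
  have hTval := (Finset.mem_filter.mp hTmem).2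
  refine ⟨T, hTval.1, hTval.2, ?_⟩
  by_contra hlt
  push_neg at hlt
  set R : Finset V := T.biUnion id with hRdef
  have hcount : ∀ W : Finset V, (∀ t ∈ T, (t ∩ W).card = 1) → ((W ∩ R).card : ℝ) ≤ T.card := by
    intro W hW
    have hWR : W ∩ R = T.biUnion fun t => W ∩ t := by
      ext x
      simp only [hRdef, Finset.mem_inter, Finset.mem_biUnion, id]
      tauto
    have hcnat : (W ∩ R).card ≤ T.card := by
      rw [hWR]
      calc (T.biUnion fun t => W ∩ t).card ≤ ∑ t ∈ T, (W ∩ t).card := Finset.card_biUnion_le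
        _ = ∑ _t ∈ T, 1 := Finset.sum_congr rfl
            (fun t ht => by rw [Finset.inter_comm]; exact hW t ht)
        _ = T.card := by simp
    exact_mod_cast hcnat
  have hkm : (T.card : ℝ) < (1-β)*m :=
    lt_of_lt_of_le hlt (mul_le_mul_of_nonneg_right (by linarith) hm0.le)
  have hU1card : (V₁.card:ℝ) - T.card ≤ ((V₁ \ R).card : ℝ) := by
    have h := Finset.card_sdiff_add_card_inter V₁ R
    have h2 := hcount V₁ (fun t ht => (hTval.2 t ht).1)
    have h3 : ((V₁ \ R).card:ℝ) + ((V₁ ∩ R).card:ℝ) = V₁.card := by exact_mod_cast h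
    linarith
  by_cases hex : ∃ v ∈ V₁ \ R, TypicalVertex G ε p V₁ V₂ V₃ v ∧
      ¬((1-2*ε) * ((nbhdIn G v V₂).card:ℝ) <
        (((V₂ ∩ R).filter fun w => G.Adj v w).card : ℝ)) ∧
      ¬((1-2*ε) * ((nbhdIn G v V₃).card:ℝ) <
        (((V₃ ∩ R).filter fun w => G.Adj v w).card : ℝ))
  · obtain ⟨v, hvU, hvty, hnb2, hnb3⟩ := hex
    rw [not_lt] at hnb2 hnb3
    obtain ⟨hvV₁, hvR⟩ := Finset.mem_sdiff.mp hvU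
    obtain ⟨⟨hN2lo, -⟩, ⟨hN3lo, -⟩, N₂', hN₂'sub, N₃', hN₃'sub, hN₂'card, hN₃'card,
      hregN, hdlo, -⟩ := hvty
    have hsub2 : N₂' ∩ R ⊆ (V₂ ∩ R).filter fun w => G.Adj v w := by
      intro x hx
      obtain ⟨hx1, hx2⟩ := Finset.mem_inter.mp hx
      have hxN := hN₂'sub hx1
      rw [nbhdIn, Finset.mem_filter] at hxN
      exact Finset.mem_filter.mpr ⟨Finset.mem_inter.mpr ⟨hxN.1, hx2⟩, hxN.2⟩
    have hsub3 : N₃' ∩ R ⊆ (V₃ ∩ R).filter fun w => G.Adj v w := by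
      intro x hx
      obtain ⟨hx1, hx2⟩ := Finset.mem_inter.mp hx
      have hxN := hN₃'sub hx1
      rw [nbhdIn, Finset.mem_filter] at hxN
      exact Finset.mem_filter.mpr ⟨Finset.mem_inter.mpr ⟨hxN.1, hx2⟩, hxN.2⟩
    have hS2card : ε * (N₂'.card:ℝ) ≤ ((N₂' \ R).card : ℝ) := by
      have hsp : ((N₂' \ R).card:ℝ) + ((N₂' ∩ R).card:ℝ) = N₂'.card := by
        exact_mod_cast Finset.card_sdiff_add_card_inter N₂' R
      have h1 : ((N₂' ∩ R).card:ℝ) ≤ (1-2*ε) * ((nbhdIn G v V₂).card:ℝ) :=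
        le_trans (by exact_mod_cast Finset.card_le_card hsub2) hnb2
      have h2 : (N₂'.card:ℝ) ≤ ((nbhdIn G v V₂).card:ℝ) := by
        exact_mod_cast Finset.card_le_card hN₂'sub
      exact arith_S ε _ _ _ _ hε hsp h1 h2 hN₂'card
    have hS3card : ε * (N₃'.card:ℝ) ≤ ((N₃' \ R).card : ℝ) := by
      have hsp : ((N₃' \ R).card:ℝ) + ((N₃' ∩ R).card:ℝ) = N₃'.card := by
        exact_mod_cast Finset.card_sdiff_add_card_inter N₃' R
      have h1 : ((N₃' ∩ R).card:ℝ) ≤ (1-2*ε) * ((nbhdIn G v V₃).card:ℝ) :=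
        le_trans (by exact_mod_cast Finset.card_le_card hsub3) hnb3
      have h2 : (N₃'.card:ℝ) ≤ ((nbhdIn G v V₃).card:ℝ) := by
        exact_mod_cast Finset.card_le_card hN₃'sub
      exact arith_S ε _ _ _ _ hε hsp h1 h2 hN₃'card
    have hdS := hregN (N₂' \ R) Finset.sdiff_subset (N₃' \ R) Finset.sdiff_subset hS2card hS3card
    have hdSpos : 0 < dens G (N₂' \ R) (N₃' \ R) := by
      have habs := (abs_le.mp hdS).2
      have hmono23 : (1-ε)*(δ*p) ≤ (1-ε)*dens G V₂ V₃ :=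
        mul_le_mul_of_nonneg_left hd23 (by linarith)
      exact arith_dens ε δ p _ _ (dens G V₂ V₃) hδ hp hε8 hεδ hd23 hdlo (by linarith)
    obtain ⟨u, huS, w, hwS, huw⟩ := exists_edge G hdSpos
    obtain ⟨huN₂', huR⟩ := Finset.mem_sdiff.mp huS
    obtain ⟨hwN₃', hwR⟩ := Finset.mem_sdiff.mp hwS
    have huN := hN₂'sub huN₂'
    have hwN := hN₃'sub hwN₃'
    rw [nbhdIn, Finset.mem_filter] at huN hwN
    obtain ⟨huV₂, hvu⟩ := huN
    obtain ⟨hwV₃, hvw⟩ := hwN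
    have hvu' : v ≠ u := fun h => Finset.disjoint_left.mp h12 hvV₁ (h ▸ huV₂)
    have hvw' : v ≠ w := fun h => Finset.disjoint_left.mp h13 hvV₁ (h ▸ hwV₃)
    have huw' : u ≠ w := fun h => Finset.disjoint_left.mp h23 huV₂ (h ▸ hwV₃)
    set t : Finset V := {v, u, w} with htdef
    have htmem : ∀ x ∈ t, x = v ∨ x = u ∨ x = w := by
      intro x hx
      simpa [htdef] using hx
    have hvt : v ∈ t := by simp [htdef]
    have htcard : t.card = 3 := Finset.card_eq_three.mpr ⟨v, u, w, hvu', hvw', huw', rfl⟩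
    have htadj : ∀ x ∈ t, ∀ y ∈ t, x ≠ y → G.Adj x y := by
      intro x hx y hy hxy
      rcases htmem x hx with rfl | rfl | rfl <;> rcases htmem y hy with rfl | rfl | rfl <;>
        first
          | exact absurd rfl hxy
          | exact hvu
          | exact hvw
          | exact huw
          | exact hvu.symm
          | exact hvw.symm
          | exact huw.symm
    have hnotR : ∀ x ∈ t, x ∉ R := by
      intro x hx
      rcases htmem x hx with rfl | rfl | rfl <;> assumption
    have huV₁ : u ∉ V₁ := Finset.disjoint_right.mp h12 huV₂
    have hwV₁ : w ∉ V₁ := Finset.disjoint_right.mp h13 hwV₃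
    have hvV₂ : v ∉ V₂ := Finset.disjoint_left.mp h12 hvV₁
    have hwV₂ : w ∉ V₂ := Finset.disjoint_right.mp h23 hwV₃
    have hvV₃ : v ∉ V₃ := Finset.disjoint_left.mp h13 hvV₁
    have huV₃ : u ∉ V₃ := Finset.disjoint_left.mp h23 huV₂
    have hi1 : t ∩ V₁ = {v} := tri_inter v u w V₁ hvV₁ huV₁ hwV₁
    have hperm2 : t = {u, v, w} := by
      rw [htdef, Finset.insert_comm]
    have hperm3 : t = {w, v, u} := by
      rw [htdef, Finset.pair_comm u w, Finset.insert_comm]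
    have hi2 : t ∩ V₂ = {u} := by rw [hperm2]; exact tri_inter u v w V₂ huV₂ hvV₂ hwV₂
    have hi3 : t ∩ V₃ = {w} := by rw [hperm3]; exact tri_inter w v u V₃ hwV₃ hvV₃ huV₃
    have htT : t ∉ T := by
      intro hmemT
      exact hvR (by rw [hRdef]; exact Finset.mem_biUnion.mpr ⟨t, hmemT, hvt⟩)
    have hdisj : ∀ s'' ∈ T, Disjoint t s'' := by
      intro s'' hs''
      refine Finset.disjoint_left.mpr fun x hx hx' => hnotR x hx ?_
      rw [hRdef]
      exact Finset.mem_biUnion.mpr ⟨s'', hs'', hx'⟩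
    have hvalid' : IsTrianglePacking G (insert t T) ∧
        ∀ s ∈ insert t T, (s ∩ V₁).card = 1 ∧ (s ∩ V₂).card = 1 ∧ (s ∩ V₃).card = 1 := by
      refine ⟨⟨?_, ?_⟩, ?_⟩
      · intro s hs
        rcases Finset.mem_insert.mp hs with rfl | hs
        · exact ⟨htcard, htadj⟩
        · exact hTval.1.1 s hs
      · intro s hs s' hs' hne
        rcases Finset.mem_insert.mp hs with rfl | hs
        · rcases Finset.mem_insert.mp hs' with rfl | hs'
          · exact absurd rfl hne
          · exact hdisj s' hs'
        · rcases Finset.mem_insert.mp hs' with rfl | hs'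
          · exact (hdisj s hs).symm
          · exact hTval.1.2 s hs s' hs' hne
      · intro s hs
        rcases Finset.mem_insert.mp hs with rfl | hs
        · exact ⟨by rw [hi1]; simp, by rw [hi2]; simp, by rw [hi3]; simp⟩
        · exact hTval.2 s hs
    have hc := hmax (insert t T) (Finset.mem_filter.mpr ⟨Finset.mem_univ _, hvalid'⟩)
    rw [Finset.card_insert_of_notMem htT] at hc
    omega
  · have hex' : ∀ v ∈ V₁ \ R, TypicalVertex G ε p V₁ V₂ V₃ v →
        ((1-2*ε) * ((nbhdIn G v V₂).card:ℝ) <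
          (((V₂ ∩ R).filter fun w => G.Adj v w).card : ℝ)) ∨
        ((1-2*ε) * ((nbhdIn G v V₃).card:ℝ) <
          (((V₃ ∩ R).filter fun w => G.Adj v w).card : ℝ)) := by
      intro v hv hty
      by_contra hcon
      push_neg at hcon
      exact hex ⟨v, hv, hty, not_lt.mpr hcon.1, not_lt.mpr hcon.2⟩
    have hUtypcard : (V₁.card:ℝ) - T.card - ε*V₁.card ≤
        (((V₁ \ R).filter (fun v => TypicalVertex G ε p V₁ V₂ V₃ v)).card : ℝ) := by
      have hsplit := Finset.card_filter_add_card_filter_not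
        (s := V₁ \ R) (p := fun v => TypicalVertex G ε p V₁ V₂ V₃ v)
      have hsub : (V₁ \ R).filter (fun v => ¬ TypicalVertex G ε p V₁ V₂ V₃ v) ⊆
          V₁.filter (fun v => ¬ TypicalVertex G ε p V₁ V₂ V₃ v) :=
        Finset.filter_subset_filter _ Finset.sdiff_subset
      have h1 : (((V₁ \ R).filter (fun v => ¬ TypicalVertex G ε p V₁ V₂ V₃ v)).card : ℝ)
          ≤ ε * V₁.card := le_trans (by exact_mod_cast Finset.card_le_card hsub) hty1
      have h2 : (((V₁ \ R).filter (fun v => TypicalVertex G ε p V₁ V₂ V₃ v)).card : ℝ)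
          + (((V₁ \ R).filter (fun v => ¬ TypicalVertex G ε p V₁ V₂ V₃ v)).card : ℝ)
          = ((V₁ \ R).card : ℝ) := by exact_mod_cast hsplit
      linarith
    set Utyp := (V₁ \ R).filter (fun v => TypicalVertex G ε p V₁ V₂ V₃ v) with hUdef
    set bad2 : V → Prop := fun v => (1-2*ε) * ((nbhdIn G v V₂).card:ℝ) <
        (((V₂ ∩ R).filter fun w => G.Adj v w).card : ℝ) with hbad2def
    have hsplitB : ((Utyp.filter bad2).card : ℝ) + ((Utyp.filter (fun v => ¬ bad2 v)).card : ℝ)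
        = (Utyp.card : ℝ) := by
      exact_mod_cast Finset.card_filter_add_card_filter_not (s := Utyp) (p := bad2)
    have hUlow : (β - ε)*(V₁.card:ℝ) ≤ (Utyp.card : ℝ) := by
      have h1 : (1-β)*m ≤ (1-β)*(V₁.card:ℝ) := mul_le_mul_of_nonneg_left hmm1 (by linarith)
      linarith [hkm, hUtypcard]
    have hUsub : Utyp ⊆ V₁ := fun x hx =>
      (Finset.mem_sdiff.mp (Finset.filter_subset _ _ hx)).1
    rcases le_total ((Utyp.filter bad2).card) ((Utyp.filter (fun v => ¬ bad2 v)).card) with hle | hle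
    · set B := Utyp.filter (fun v => ¬ bad2 v) with hBdef
      have hleR : ((Utyp.filter bad2).card : ℝ) ≤ (B.card : ℝ) := by exact_mod_cast hle
      have hBlow : ε * (V₁.card:ℝ) ≤ (B.card : ℝ) := by
        have hgap : (0:ℝ) ≤ (β - 3*ε) * V₁.card :=
          mul_nonneg (by linarith) hm1R.le
        linarith [hsplitB, hUlow, hleR]
      have hBne : B.Nonempty := by
        have h0 : (0:ℝ) < B.card := lt_of_lt_of_le (mul_pos hε hm1R) hBlow
        exact Finset.card_pos.mp (by exact_mod_cast h0)
      have hbad3 : ∀ v ∈ B,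
          (1-ε) * (dens G V₁ V₃ * V₃.card) ≤ ((nbhdIn G v V₃).card : ℝ) ∧
          (1-2*ε) * ((nbhdIn G v V₃).card : ℝ) <
            (((V₃ ∩ R).filter fun w => G.Adj v w).card : ℝ) := by
        intro v hv
        obtain ⟨hvU, hnb2⟩ := Finset.mem_filter.mp hv
        obtain ⟨hvVR, hvty⟩ := Finset.mem_filter.mp hvU
        rcases hex' v hvVR hvty with h | h
        · exact absurd h hnb2
        · exact ⟨hvty.2.1.1, h⟩
      have hBV₁ : B ⊆ V₁ := fun x hx => hUsub (Finset.filter_subset _ _ hx)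
      have hsb := side_bound G ε p δ β V₁ V₃ hε hε8 hεδp hεβδ hεβ hβ0 hδ hp hm3R
        hreg13 hd13 (V₃ ∩ R) B Finset.inter_subset_left hBV₁ hBlow hBne hbad3
      have hc3 := hcount V₃ (fun s hs => (hTval.2 s hs).2.2)
      have hmono : (1-β)*m ≤ (1-β)*(V₃.card:ℝ) := mul_le_mul_of_nonneg_left hmm3 (by linarith)
      linarith
    · set B := Utyp.filter bad2 with hBdef
      have hleR : ((Utyp.filter (fun v => ¬ bad2 v)).card : ℝ) ≤ (B.card : ℝ) := by
        exact_mod_cast hle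
      have hBlow : ε * (V₁.card:ℝ) ≤ (B.card : ℝ) := by
        have hgap : (0:ℝ) ≤ (β - 3*ε) * V₁.card :=
          mul_nonneg (by linarith) hm1R.le
        linarith [hsplitB, hUlow, hleR]
      have hBne : B.Nonempty := by
        have h0 : (0:ℝ) < B.card := lt_of_lt_of_le (mul_pos hε hm1R) hBlow
        exact Finset.card_pos.mp (by exact_mod_cast h0)
      have hbad2' : ∀ v ∈ B,
          (1-ε) * (dens G V₁ V₂ * V₂.card) ≤ ((nbhdIn G v V₂).card : ℝ) ∧
          (1-2*ε) * ((nbhdIn G v V₂).card : ℝ) <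
            (((V₂ ∩ R).filter fun w => G.Adj v w).card : ℝ) := by
        intro v hv
        obtain ⟨hvU, hnb2⟩ := Finset.mem_filter.mp hv
        obtain ⟨hvVR, hvty⟩ := Finset.mem_filter.mp hvU
        exact ⟨hvty.1.1, hnb2⟩
      have hBV₁ : B ⊆ V₁ := fun x hx => hUsub (Finset.filter_subset _ _ hx)
      have hsb := side_bound G ε p δ β V₁ V₂ hε hε8 hεδp hεβδ hεβ hβ0 hδ hp hm2R
        hreg12 hd12 (V₂ ∩ R) B Finset.inter_subset_left hBV₁ hBlow hBne hbad2'
      have hc2 := hcount V₂ (fun s hs => (hTval.2 s hs).2.1)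
      have hmono : (1-β)*m ≤ (1-β)*(V₂.card:ℝ) := mul_le_mul_of_nonneg_left hmm2 (by linarith)
      linarith
end
end

section
/- For all positive reals ε' and δ there exists ε = ε(ε', δ) > 0 such that the following holds. Let (V₁, V₂, V₃) be an (ε, p)-regular triple in which the density of each pair (Vᵢ, Vⱼ) is d_{ij}p with d_{ij} ≥ δ. For each i, let Xᵢ ⊆ Vᵢ be an arbitrary subset with |Xᵢ| ≤ ε|Vᵢ|. Then every vertex v ∈ V₁ \ X₁ that is ε-typical in (V₁, V₂, V₃) and satisfies deg(v, Xⱼ) ≤ εp|Vⱼ| for every j ∈ {2, 3} is an ε'-typical vertex of the triple (V₁ \ X₁, V₂ \ X₂, V₃ \ X₃). -/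
open Finset

open scoped Classical

noncomputable section

open RandomTriangle

namespace RandomTriangle

lemma dens_nonneg' {V : Type*} (G : SimpleGraph V) (X Y : Finset V) : 0 ≤ dens G X Y :=
  div_nonneg (Nat.cast_nonneg _) (by positivity)

lemma regPair_mono {V : Type*} (G : SimpleGraph V) {e1 e2 p : ℝ} (h : e1 ≤ e2) (hp : 0 ≤ p)
    {X Y : Finset V} (hr : RegularPair G e1 p X Y) : RegularPair G e2 p X Y := by
  intro X' hX' Y' hY' h1 h2
  exact le_trans (hr X' hX' Y' hY'
    (le_trans (mul_le_mul_of_nonneg_right h (Nat.cast_nonneg _)) h1)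
    (le_trans (mul_le_mul_of_nonneg_right h (Nat.cast_nonneg _)) h2))
    (mul_le_mul_of_nonneg_right h hp)

lemma typical_mono {V : Type*} (G : SimpleGraph V) {e1 e2 p : ℝ} (h : e1 ≤ e2) (hp : 0 ≤ p)
    {V₁ V₂ V₃ : Finset V} {v : V} (ht : TypicalVertex G e1 p V₁ V₂ V₃ v) :
    TypicalVertex G e2 p V₁ V₂ V₃ v := by
  obtain ⟨⟨a1, a2⟩, ⟨b1, b2⟩, N₂', hN₂', N₃', hN₃', c1, c2, c3, c4, c5⟩ := ht
  have h12 : (0:ℝ) ≤ dens G V₁ V₂ * V₂.card := mul_nonneg (dens_nonneg' _ _ _) (Nat.cast_nonneg _)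
  have h13 : (0:ℝ) ≤ dens G V₁ V₃ * V₃.card := mul_nonneg (dens_nonneg' _ _ _) (Nat.cast_nonneg _)
  have h23 : (0:ℝ) ≤ dens G V₂ V₃ := dens_nonneg' _ _ _
  have n2 : (0:ℝ) ≤ ((nbhdIn G v V₂).card : ℝ) := Nat.cast_nonneg _
  have n3 : (0:ℝ) ≤ ((nbhdIn G v V₃).card : ℝ) := Nat.cast_nonneg _
  refine ⟨⟨by nlinarith, by nlinarith⟩, ⟨by nlinarith, by nlinarith⟩,
    N₂', hN₂', N₃', hN₃', by nlinarith, by nlinarith, regPair_mono G h hp c3,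
    by nlinarith, by nlinarith⟩

lemma aux_dens {V : Type*} [DecidableEq V] (G : SimpleGraph V) {ε p : ℝ}
    {U W XU XW : Finset V} (hε0 : 0 ≤ ε) (hεh : ε ≤ 1/2)
    (hXU : XU ⊆ U) (hXW : XW ⊆ W)
    (hcU : (XU.card : ℝ) ≤ ε * U.card) (hcW : (XW.card : ℝ) ≤ ε * W.card)
    (hreg : RegularPair G ε p U W) :
    |dens G U W - dens G (U \ XU) (W \ XW)| ≤ ε * p := by
  apply hreg _ sdiff_subset _ sdiff_subset
  · rw [card_sdiff_of_subset hXU, Nat.cast_sub (card_le_card hXU)]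
    nlinarith [(Nat.cast_nonneg U.card : (0:ℝ) ≤ U.card)]
  · rw [card_sdiff_of_subset hXW, Nat.cast_sub (card_le_card hXW)]
    nlinarith [(Nat.cast_nonneg W.card : (0:ℝ) ≤ W.card)]

lemma nbhdIn_sdiff {V : Type*} [DecidableEq V] (G : SimpleGraph V) (v : V) (A B : Finset V) :
    nbhdIn G v (A \ B) = nbhdIn G v A \ nbhdIn G v B := by
  ext x
  simp only [nbhdIn, mem_filter, mem_sdiff]
  tauto

lemma nbhdIn_mono {V : Type*} (G : SimpleGraph V) (v : V) {A B : Finset V} (h : A ⊆ B) :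
    nbhdIn G v A ⊆ nbhdIn G v B := filter_subset_filter _ h

lemma card_nbhdIn_sdiff {V : Type*} [DecidableEq V] (G : SimpleGraph V) (v : V)
    {A B : Finset V} (h : B ⊆ A) :
    ((nbhdIn G v (A \ B)).card : ℝ) = ((nbhdIn G v A).card : ℝ) - (degIn G v B : ℝ) := by
  rw [nbhdIn_sdiff, card_sdiff_of_subset (nbhdIn_mono G v h),
    Nat.cast_sub (card_le_card (nbhdIn_mono G v h))]
  rfl

lemma aux_side {V : Type*} [DecidableEq V] (G : SimpleGraph V) {e ε p : ℝ}
    {V₁ V₂ X₁ X₂ : Finset V} {v : V}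
    (hp : 0 < p) (he : 0 < e) (he1 : e ≤ 1)
    (hε0 : 0 < ε) (hεs : ε ≤ e / 100)
    (hεp : ε * p ≤ e / 100 * dens G V₁ V₂)
    (hX₁ : X₁ ⊆ V₁) (hX₂ : X₂ ⊆ V₂)
    (hX1c : (X₁.card : ℝ) ≤ ε * V₁.card) (hX2c : (X₂.card : ℝ) ≤ ε * V₂.card)
    (hreg : RegularPair G ε p V₁ V₂)
    (hlo : (1 - ε) * (dens G V₁ V₂ * V₂.card) ≤ ((nbhdIn G v V₂).card : ℝ))
    (hhi : ((nbhdIn G v V₂).card : ℝ) ≤ (1 + ε) * (dens G V₁ V₂ * V₂.card))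
    (hdeg : (degIn G v X₂ : ℝ) ≤ ε * p * V₂.card) :
    (1 - e) * (dens G (V₁ \ X₁) (V₂ \ X₂) * ((V₂ \ X₂).card : ℝ)) ≤
      ((nbhdIn G v (V₂ \ X₂)).card : ℝ) ∧
    ((nbhdIn G v (V₂ \ X₂)).card : ℝ) ≤
      (1 + e) * (dens G (V₁ \ X₁) (V₂ \ X₂) * ((V₂ \ X₂).card : ℝ)) := by
  have hD0 : 0 ≤ dens G V₁ V₂ := dens_nonneg' _ _ _
  have habs := aux_dens G hε0.le (by linarith) hX₁ hX₂ hX1c hX2c hreg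
  rw [abs_le] at habs
  obtain ⟨hab1, hab2⟩ := habs
  set D := dens G V₁ V₂ with hDdef
  set dAB := dens G (V₁ \ X₁) (V₂ \ X₂) with hdABdef
  have hdAB0 : 0 ≤ dAB := dens_nonneg' _ _ _
  have hn2 : (0:ℝ) ≤ (V₂.card : ℝ) := Nat.cast_nonneg _
  have hnB0 : (0:ℝ) ≤ (((V₂ \ X₂).card : ℕ) : ℝ) := Nat.cast_nonneg _
  have hnBle : (((V₂ \ X₂).card : ℕ) : ℝ) ≤ (V₂.card : ℝ) := by
    exact_mod_cast card_le_card sdiff_subset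
  have hnBge : (V₂.card : ℝ) - ε * V₂.card ≤ (((V₂ \ X₂).card : ℕ) : ℝ) := by
    rw [card_sdiff_of_subset hX₂, Nat.cast_sub (card_le_card hX₂)]
    linarith
  have hN20 : (0:ℝ) ≤ ((nbhdIn G v V₂).card : ℝ) := Nat.cast_nonneg _
  have hdeg0 : (0:ℝ) ≤ (degIn G v X₂ : ℝ) := Nat.cast_nonneg _
  have hnb := card_nbhdIn_sdiff G v hX₂
  have hs : (0:ℝ) ≤ D * V₂.card := mul_nonneg hD0 hn2
  have hεpn : ε * p * V₂.card ≤ e / 100 * (D * V₂.card) := by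
    linarith [mul_le_mul_of_nonneg_right hεp hn2]
  have hdABhi : dAB ≤ (1 + e / 100) * D := by linarith
  have hdABlo : (1 - e / 100) * D ≤ dAB := by linarith
  have hεss : ε * (D * V₂.card) ≤ e / 100 * (D * V₂.card) :=
    mul_le_mul_of_nonneg_right hεs hs
  constructor
  · have k1 : dAB * ((V₂ \ X₂).card : ℝ) ≤ (1 + e / 100) * (D * V₂.card) := by
      linarith [mul_le_mul hdABhi hnBle hnB0
        (mul_nonneg (by linarith : (0:ℝ) ≤ 1 + e / 100) hD0)]
    have k2 : (1 - e / 50) * (D * V₂.card) ≤ ((nbhdIn G v (V₂ \ X₂)).card : ℝ) := by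
      rw [hnb]; linarith
    have k3 : (1 - e) * (dAB * ((V₂ \ X₂).card : ℝ)) ≤ (1 - e) * ((1 + e / 100) * (D * V₂.card)) :=
      mul_le_mul_of_nonneg_left k1 (by linarith)
    linarith [mul_nonneg he.le hs, mul_nonneg (mul_nonneg he.le he.le) hs]
  · have k1 : ((nbhdIn G v (V₂ \ X₂)).card : ℝ) ≤ (1 + e / 100) * (D * V₂.card) := by
      rw [hnb]; linarith
    have hnBge' : (1 - e / 100) * (V₂.card : ℝ) ≤ (((V₂ \ X₂).card : ℕ) : ℝ) := by
      linarith [mul_le_mul_of_nonneg_right hεs hn2]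
    have k2 : ((1 - e / 100) * D) * ((1 - e / 100) * (V₂.card : ℝ)) ≤
        dAB * (((V₂ \ X₂).card : ℕ) : ℝ) :=
      mul_le_mul hdABlo hnBge' (mul_nonneg (by linarith) hn2) hdAB0
    have k3 : (1 + e) * (((1 - e / 100) * D) * ((1 - e / 100) * (V₂.card : ℝ))) ≤
        (1 + e) * (dAB * (((V₂ \ X₂).card : ℕ) : ℝ)) :=
      mul_le_mul_of_nonneg_left k2 (by linarith)
    have m2 : e * e * (D * V₂.card) ≤ 1 * e * (D * V₂.card) :=
      mul_le_mul_of_nonneg_right (mul_le_mul_of_nonneg_right he1 he.le) hs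
    linarith [mul_nonneg he.le hs, mul_nonneg (mul_nonneg he.le he.le) hs,
      mul_nonneg (mul_nonneg (mul_nonneg he.le he.le) he.le) hs]

end RandomTriangle


set_option maxHeartbeats 2000000 in
/-- **Proposition (stability of typicality).** Removing small sets `Xᵢ ⊆ Vᵢ` from a regular
triple keeps an `ε`-typical vertex with few neighbours in the removed sets `ε'`-typical. -/
theorem stmt_5 (ε' δ : ℝ) (hε' : 0 < ε') (hδ : 0 < δ) :
    ∃ ε : ℝ, 0 < ε ∧
      ∀ (V : Type) [Fintype V] [DecidableEq V] (G : SimpleGraph V) (p : ℝ)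
        (V₁ V₂ V₃ : Finset V) (d₁₂ d₁₃ d₂₃ : ℝ), 0 < p →
        Disjoint V₁ V₂ → Disjoint V₁ V₃ → Disjoint V₂ V₃ →
        RegularTriple G ε p V₁ V₂ V₃ →
        dens G V₁ V₂ = d₁₂ * p → dens G V₁ V₃ = d₁₃ * p → dens G V₂ V₃ = d₂₃ * p →
        δ ≤ d₁₂ → δ ≤ d₁₃ → δ ≤ d₂₃ →
        ∀ X₁ ⊆ V₁, ∀ X₂ ⊆ V₂, ∀ X₃ ⊆ V₃,
          (X₁.card : ℝ) ≤ ε * V₁.card → (X₂.card : ℝ) ≤ ε * V₂.card →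
          (X₃.card : ℝ) ≤ ε * V₃.card →
          ∀ v ∈ V₁ \ X₁, TypicalVertex G ε p V₁ V₂ V₃ v →
            (degIn G v X₂ : ℝ) ≤ ε * p * V₂.card →
            (degIn G v X₃ : ℝ) ≤ ε * p * V₃.card →
            TypicalVertex G ε' p (V₁ \ X₁) (V₂ \ X₂) (V₃ \ X₃) v := by
  have he : 0 < min ε' 1 := lt_min hε' one_pos
  have hD : 0 < min δ 1 := lt_min hδ one_pos
  set e := min ε' 1 with hedef
  set Dm := min δ 1 with hDdef
  have he1 : e ≤ 1 := min_le_right _ _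
  have hD1 : Dm ≤ 1 := min_le_right _ _
  refine ⟨e * Dm / 100, by positivity, ?_⟩
  intro V _ _ G p V₁ V₂ V₃ d₁₂ d₁₃ d₂₃ hp _ _ _ hreg h12 h13 h23 hd12 hd13 hd23
    X₁ hX₁ X₂ hX₂ X₃ hX₃ hX1c hX2c hX3c v hv htyp hdeg2 hdeg3
  set ε := e * Dm / 100 with hεdef
  have hε0 : 0 < ε := by positivity
  have heD1 : e * Dm ≤ e * 1 := mul_le_mul_of_nonneg_left hD1 he.le
  have hεe : ε ≤ e / 100 := by rw [hεdef]; linarith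
  have hεhalf : ε ≤ 1 / 2 := by rw [hεdef]; nlinarith [mul_le_one₀ he1 hD.le hD1]
  have hεp12 : ε * p ≤ e / 100 * dens G V₁ V₂ := by
    rw [h12]
    have h1 : Dm ≤ d₁₂ := le_trans (min_le_left _ _) hd12
    have h2 := mul_le_mul_of_nonneg_right (mul_le_mul_of_nonneg_left h1 he.le) hp.le
    rw [hεdef]; linarith
  have hεp13 : ε * p ≤ e / 100 * dens G V₁ V₃ := by
    rw [h13]
    have h1 : Dm ≤ d₁₃ := le_trans (min_le_left _ _) hd13
    have h2 := mul_le_mul_of_nonneg_right (mul_le_mul_of_nonneg_left h1 he.le) hp.le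
    rw [hεdef]; linarith
  have hεp23 : ε * p ≤ e / 100 * dens G V₂ V₃ := by
    rw [h23]
    have h1 : Dm ≤ d₂₃ := le_trans (min_le_left _ _) hd23
    have h2 := mul_le_mul_of_nonneg_right (mul_le_mul_of_nonneg_left h1 he.le) hp.le
    rw [hεdef]; linarith
  apply typical_mono G (min_le_left ε' 1) hp.le
  obtain ⟨hr12, hr13, hr23⟩ := hreg
  obtain ⟨⟨h2lo, h2hi⟩, ⟨h3lo, h3hi⟩, N₂', hN₂'sub, N₃', hN₃'sub, hc2, hc3, hNreg, hdlo, hdhi⟩ :=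
    htyp
  refine ⟨aux_side G hp he he1 hε0 hεe hεp12 hX₁ hX₂ hX1c hX2c hr12 h2lo h2hi hdeg2,
    aux_side G hp he he1 hε0 hεe hεp13 hX₁ hX₃ hX1c hX3c hr13 h3lo h3hi hdeg3, ?_⟩
  -- the regular sub-pair
  have hD23 : 0 ≤ dens G V₂ V₃ := dens_nonneg' _ _ _
  have hD12 : 0 ≤ dens G V₁ V₂ := dens_nonneg' _ _ _
  have hD13 : 0 ≤ dens G V₁ V₃ := dens_nonneg' _ _ _
  have hn2 : (0:ℝ) ≤ (V₂.card : ℝ) := Nat.cast_nonneg _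
  have hn3 : (0:ℝ) ≤ (V₃.card : ℝ) := Nat.cast_nonneg _
  have hs2 : (0:ℝ) ≤ dens G V₁ V₂ * V₂.card := mul_nonneg hD12 hn2
  have hs3 : (0:ℝ) ≤ dens G V₁ V₃ * V₃.card := mul_nonneg hD13 hn3
  have hN2c0 : (0:ℝ) ≤ ((nbhdIn G v V₂).card : ℝ) := Nat.cast_nonneg _
  have hN3c0 : (0:ℝ) ≤ ((nbhdIn G v V₃).card : ℝ) := Nat.cast_nonneg _
  have hN2'c0 : (0:ℝ) ≤ (N₂'.card : ℝ) := Nat.cast_nonneg _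
  have hN3'c0 : (0:ℝ) ≤ (N₃'.card : ℝ) := Nat.cast_nonneg _
  -- lower bounds on N₂', N₃' in terms of s₂, s₃
  have hεss2 : ε * (dens G V₁ V₂ * V₂.card) ≤ e / 100 * (dens G V₁ V₂ * V₂.card) :=
    mul_le_mul_of_nonneg_right hεe hs2
  have hεss3 : ε * (dens G V₁ V₃ * V₃.card) ≤ e / 100 * (dens G V₁ V₃ * V₃.card) :=
    mul_le_mul_of_nonneg_right hεe hs3
  have hN2'lo : (1 - e / 50) * (dens G V₁ V₂ * V₂.card) ≤ (N₂'.card : ℝ) := by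
    have h1 : (1 - ε) * ((1 - ε) * (dens G V₁ V₂ * V₂.card)) ≤
        (1 - ε) * ((nbhdIn G v V₂).card : ℝ) :=
      mul_le_mul_of_nonneg_left h2lo (by linarith)
    linarith [hc2, hεss2, mul_nonneg (mul_nonneg hε0.le hε0.le) hs2]
  have hN3'lo : (1 - e / 50) * (dens G V₁ V₃ * V₃.card) ≤ (N₃'.card : ℝ) := by
    have h1 : (1 - ε) * ((1 - ε) * (dens G V₁ V₃ * V₃.card)) ≤
        (1 - ε) * ((nbhdIn G v V₃).card : ℝ) :=
      mul_le_mul_of_nonneg_left h3lo (by linarith)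
    linarith [hc3, hεss3, mul_nonneg (mul_nonneg hε0.le hε0.le) hs3]
  have hN2'half : (1 / 2) * (dens G V₁ V₂ * V₂.card) ≤ (N₂'.card : ℝ) := by
    linarith [hN2'lo, mul_le_mul_of_nonneg_right he1 hs2]
  have hN3'half : (1 / 2) * (dens G V₁ V₃ * V₃.card) ≤ (N₃'.card : ℝ) := by
    linarith [hN3'lo, mul_le_mul_of_nonneg_right he1 hs3]
  -- degree bounds in terms of N'
  have hdeg2' : (degIn G v X₂ : ℝ) ≤ e / 50 * (N₂'.card : ℝ) := by
    have h1 : ε * p * (V₂.card : ℝ) ≤ e / 100 * (dens G V₁ V₂ * V₂.card) := by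
      linarith [mul_le_mul_of_nonneg_right hεp12 hn2]
    linarith [hdeg2, h1, mul_le_mul_of_nonneg_left hN2'half he.le]
  have hdeg3' : (degIn G v X₃ : ℝ) ≤ e / 50 * (N₃'.card : ℝ) := by
    have h1 : ε * p * (V₃.card : ℝ) ≤ e / 100 * (dens G V₁ V₃ * V₃.card) := by
      linarith [mul_le_mul_of_nonneg_right hεp13 hn3]
    linarith [hdeg3, h1, mul_le_mul_of_nonneg_left hN3'half he.le]
  -- cardinality of M₂ = N₂' \ X₂
  have hM2card : (1 - e / 50) * (N₂'.card : ℝ) ≤ ((N₂' \ X₂).card : ℝ) := by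
    have hsub : N₂' ∩ X₂ ⊆ nbhdIn G v X₂ := by
      intro x hx
      have h1 := (mem_inter.mp hx).1
      have h2 := (mem_inter.mp hx).2
      have h3 := hN₂'sub h1
      simp only [nbhdIn, mem_filter] at h3 ⊢
      exact ⟨h2, h3.2⟩
    have h4 : (N₂' \ X₂).card + (N₂' ∩ X₂).card = N₂'.card := card_sdiff_add_card_inter _ _
    have h5 : ((N₂' ∩ X₂).card : ℝ) ≤ (degIn G v X₂ : ℝ) := by
      exact_mod_cast card_le_card hsub
    have h6 : ((N₂' \ X₂).card : ℝ) + ((N₂' ∩ X₂).card : ℝ) = (N₂'.card : ℝ) := by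
      exact_mod_cast congrArg (Nat.cast : ℕ → ℝ) h4
    linarith
  have hM3card : (1 - e / 50) * (N₃'.card : ℝ) ≤ ((N₃' \ X₃).card : ℝ) := by
    have hsub : N₃' ∩ X₃ ⊆ nbhdIn G v X₃ := by
      intro x hx
      have h1 := (mem_inter.mp hx).1
      have h2 := (mem_inter.mp hx).2
      have h3 := hN₃'sub h1
      simp only [nbhdIn, mem_filter] at h3 ⊢
      exact ⟨h2, h3.2⟩
    have h4 : (N₃' \ X₃).card + (N₃' ∩ X₃).card = N₃'.card := card_sdiff_add_card_inter _ _
    have h5 : ((N₃' ∩ X₃).card : ℝ) ≤ (degIn G v X₃ : ℝ) := by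
      exact_mod_cast card_le_card hsub
    have h6 : ((N₃' \ X₃).card : ℝ) + ((N₃' ∩ X₃).card : ℝ) = (N₃'.card : ℝ) := by
      exact_mod_cast congrArg (Nat.cast : ℕ → ℝ) h4
    linarith
  have hM2big : ε * (N₂'.card : ℝ) ≤ ((N₂' \ X₂).card : ℝ) := by
    linarith [hM2card, mul_le_mul_of_nonneg_right hεe hN2'c0,
      mul_le_mul_of_nonneg_right he1 hN2'c0]
  have hM3big : ε * (N₃'.card : ℝ) ≤ ((N₃' \ X₃).card : ℝ) := by
    linarith [hM3card, mul_le_mul_of_nonneg_right hεe hN3'c0,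
      mul_le_mul_of_nonneg_right he1 hN3'c0]
  have hMM := hNreg (N₂' \ X₂) sdiff_subset (N₃' \ X₃) sdiff_subset hM2big hM3big
  rw [abs_le] at hMM
  have hBC := aux_dens G hε0.le hεhalf hX₂ hX₃ hX2c hX3c hr23
  rw [abs_le] at hBC
  refine ⟨N₂' \ X₂, ?_, N₃' \ X₃, ?_, ?_, ?_, ?_, ?_, ?_⟩
  · intro x hx
    have h1 := (mem_sdiff.mp hx).1
    have h2 := (mem_sdiff.mp hx).2
    have h3 := hN₂'sub h1
    simp only [nbhdIn, mem_filter, mem_sdiff] at h3 ⊢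
    exact ⟨⟨h3.1, h2⟩, h3.2⟩
  · intro x hx
    have h1 := (mem_sdiff.mp hx).1
    have h2 := (mem_sdiff.mp hx).2
    have h3 := hN₃'sub h1
    simp only [nbhdIn, mem_filter, mem_sdiff] at h3 ⊢
    exact ⟨⟨h3.1, h2⟩, h3.2⟩
  · -- (1 - e) * |nbhd v (V₂ \ X₂)| ≤ |M₂|
    have h1 : ((nbhdIn G v (V₂ \ X₂)).card : ℝ) ≤ ((nbhdIn G v V₂).card : ℝ) := by
      exact_mod_cast card_le_card (nbhdIn_mono G v sdiff_subset)
    have h2 : (1 - e / 50) * ((1 - ε) * ((nbhdIn G v V₂).card : ℝ)) ≤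
        (1 - e / 50) * (N₂'.card : ℝ) :=
      mul_le_mul_of_nonneg_left hc2 (by linarith)
    linarith [hM2card, mul_le_mul_of_nonneg_left h1 (by linarith : (0:ℝ) ≤ 1 - e),
      mul_le_mul_of_nonneg_right hεe hN2c0,
      mul_nonneg (mul_nonneg he.le hε0.le) hN2c0,
      mul_nonneg he.le hN2c0]
  · have h1 : ((nbhdIn G v (V₃ \ X₃)).card : ℝ) ≤ ((nbhdIn G v V₃).card : ℝ) := by
      exact_mod_cast card_le_card (nbhdIn_mono G v sdiff_subset)
    have h2 : (1 - e / 50) * ((1 - ε) * ((nbhdIn G v V₃).card : ℝ)) ≤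
        (1 - e / 50) * (N₃'.card : ℝ) :=
      mul_le_mul_of_nonneg_left hc3 (by linarith)
    linarith [hM3card, mul_le_mul_of_nonneg_left h1 (by linarith : (0:ℝ) ≤ 1 - e),
      mul_le_mul_of_nonneg_right hεe hN3c0,
      mul_nonneg (mul_nonneg he.le hε0.le) hN3c0,
      mul_nonneg he.le hN3c0]
  · -- regularity of the pair (M₂, M₃) with parameter e
    intro X'' hX'' Y'' hY'' hXc hYc
    have hXbig : ε * (N₂'.card : ℝ) ≤ (X''.card : ℝ) := by
      have h1 : e * ((1 - e / 50) * (N₂'.card : ℝ)) ≤ e * ((N₂' \ X₂).card : ℝ) :=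
        mul_le_mul_of_nonneg_left hM2card he.le
      linarith [hXc, mul_le_mul_of_nonneg_right hεe hN2'c0,
        mul_nonneg he.le hN2'c0,
        mul_le_mul_of_nonneg_right (mul_le_mul_of_nonneg_right he1 he.le) hN2'c0]
    have hYbig : ε * (N₃'.card : ℝ) ≤ (Y''.card : ℝ) := by
      have h1 : e * ((1 - e / 50) * (N₃'.card : ℝ)) ≤ e * ((N₃' \ X₃).card : ℝ) :=
        mul_le_mul_of_nonneg_left hM3card he.le
      linarith [hYc, mul_le_mul_of_nonneg_right hεe hN3'c0,
        mul_nonneg he.le hN3'c0,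
        mul_le_mul_of_nonneg_right (mul_le_mul_of_nonneg_right he1 he.le) hN3'c0]
    have h1 := hNreg X'' (hX''.trans sdiff_subset) Y'' (hY''.trans sdiff_subset) hXbig hYbig
    have h2 : |dens G (N₂' \ X₂) (N₃' \ X₃) - dens G X'' Y''| ≤
        |dens G (N₂' \ X₂) (N₃' \ X₃) - dens G N₂' N₃'| +
        |dens G N₂' N₃' - dens G X'' Y''| := abs_sub_le _ _ _
    have h3 : |dens G (N₂' \ X₂) (N₃' \ X₃) - dens G N₂' N₃'| ≤ ε * p := by
      rw [abs_sub_comm, abs_le]; exact hMM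
    have h4 : ε * p ≤ e / 100 * p := mul_le_mul_of_nonneg_right hεe hp.le
    calc |dens G (N₂' \ X₂) (N₃' \ X₃) - dens G X'' Y''| ≤
        |dens G (N₂' \ X₂) (N₃' \ X₃) - dens G N₂' N₃'| +
        |dens G N₂' N₃' - dens G X'' Y''| := h2
      _ ≤ e * p := by linarith
  · -- lower density bound
    have h1 : (1 - e) * dens G (V₂ \ X₂) (V₃ \ X₃) ≤
        (1 - e) * ((1 + e / 100) * dens G V₂ V₃) := by
      apply mul_le_mul_of_nonneg_left _ (by linarith)
      linarith [hBC.1, hεp23]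
    have h2 : (1 - e / 50) * dens G V₂ V₃ ≤ dens G (N₂' \ X₂) (N₃' \ X₃) := by
      have h3 : ε * dens G V₂ V₃ ≤ e / 100 * dens G V₂ V₃ :=
        mul_le_mul_of_nonneg_right hεe hD23
      have h4 : ε * p ≤ e / 100 * dens G V₂ V₃ := hεp23
      linarith [hMM.2, hdlo]
    have h5 : (0:ℝ) ≤ e * dens G V₂ V₃ := mul_nonneg he.le hD23
    have h6 : (0:ℝ) ≤ e * (e * dens G V₂ V₃) := mul_nonneg he.le h5
    linarith
  · -- upper density bound
    have h2 : dens G (N₂' \ X₂) (N₃' \ X₃) ≤ (1 + e / 50) * dens G V₂ V₃ := by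
      have h3 : ε * dens G V₂ V₃ ≤ e / 100 * dens G V₂ V₃ :=
        mul_le_mul_of_nonneg_right hεe hD23
      linarith [hMM.1, hdhi, hεp23]
    have h1 : (1 + e) * ((1 - e / 100) * dens G V₂ V₃) ≤
        (1 + e) * dens G (V₂ \ X₂) (V₃ \ X₃) := by
      apply mul_le_mul_of_nonneg_left _ (by linarith)
      have h3 : ε * dens G V₂ V₃ ≤ e / 100 * dens G V₂ V₃ :=
        mul_le_mul_of_nonneg_right hεe hD23
      linarith [hBC.2, hεp23]
    have h5 : (0:ℝ) ≤ e * dens G V₂ V₃ := mul_nonneg he.le hD23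
    have h6 : e * (e * dens G V₂ V₃) ≤ 1 * (e * dens G V₂ V₃) :=
      mul_le_mul_of_nonneg_right he1 h5
    linarith
end
end

section
/- Let ε, ε', δ be positive reals satisfying 3ε + ε/δ ≤ ε', and let (V₁, V₂, V₃) be an ε-typical (ε, p)-regular triple in which the density d_{ij}p of each pair (Vᵢ, Vⱼ) is at least δp. Then at most 4ε·d_{23}p|V₂||V₃| of the edges between V₂ and V₃ fail to be ε'-good. -/
open Finset

open scoped Classical

noncomputable section

open RandomTriangle

section Arith

private lemma arith_pos_factor (a δ : ℝ) (hδ : 0 < δ) (h : 0 < a * δ) : 0 < a := by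
  by_contra h'
  push_neg at h'
  nlinarith

private lemma arith_eps_lt_third (ε δ : ℝ) (hε : 0 < ε) (hδ : 0 < δ)
    (h : ε < δ * (1 - 3 * ε)) : ε < 1 / 3 := by
  by_contra h'
  push_neg at h'
  nlinarith

private lemma arith_q_pos (ε δ d : ℝ) (hε : 0 < ε) (hδ : 0 < δ)
    (h : ε < δ * (1 - 3 * ε)) (hd : δ ≤ d) : 0 < (1 - ε) * d - ε := by
  have h3 : ε < 1 / 3 := arith_eps_lt_third ε δ hε hδ h
  nlinarith [mul_pos hε hδ, mul_nonneg (by linarith : (0:ℝ) ≤ 1 - ε) (by linarith : (0:ℝ) ≤ d - δ)]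

private lemma arith_scalar (ε ε' d : ℝ) (hε : 0 < ε) (hε13 : ε < 1 / 3)
    (hd : 0 < d) (h4 : ε ≤ (ε' - 3 * ε) * d) :
    (1 - ε') * d ≤ (1 - ε) ^ 2 * ((1 - ε) * d - ε) := by
  nlinarith [mul_nonneg (mul_nonneg hε.le hε.le) hd.le, sq_nonneg ε,
    mul_le_mul_of_nonneg_right hε13.le (mul_nonneg (mul_nonneg hε.le hε.le) hd.le),
    mul_nonneg hε.le hε.le]

private lemma arith_count (ε x y w b : ℝ) (hb : b ≤ (x - y) + w) (hw : w ≤ ε * y)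
    (hy : y ≤ x) (h3 : (1 - ε) * x ≤ y) (hε1 : (0:ℝ) ≤ 1 - ε) :
    b ≤ (2 * ε - ε ^ 2) * x := by
  nlinarith [mul_le_mul_of_nonneg_left h3 hε1]

private lemma arith_good_trivial (e' X c : ℝ) (h : 1 ≤ e') (hX : 0 ≤ X) (hc : 0 ≤ c) :
    (1 - e') * X ≤ c :=
  le_trans (mul_nonpos_of_nonpos_of_nonneg (by linarith) hX) hc

private lemma arith_final_s6 (ε A B E : ℝ) (hABE : A + B = E)
    (h1' : (1 - ε) ^ 2 * ((1 - ε) ^ 2 * E) ≤ (1 - ε) ^ 2 * A) (hB : 0 ≤ B)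
    (hprod : 0 ≤ ε ^ 2 * (6 - 4 * ε + ε ^ 2) * E) :
    (2 * ε - ε ^ 2) * A + B ≤ 4 * ε * E := by
  nlinarith [h1', hB, hprod, hABE]

private lemma arith_poly (ε E : ℝ) (hE : 0 ≤ E) : 0 ≤ ε ^ 2 * (6 - 4 * ε + ε ^ 2) * E := by
  have h : (0:ℝ) ≤ ε ^ 2 * (6 - 4 * ε + ε ^ 2) := by
    nlinarith [sq_nonneg (ε * (ε - 2)), sq_nonneg ε]
  exact mul_nonneg h hE

end Arith


section Aux

variable {V : Type*}

lemma card_filter_product (X Y : Finset V) (P : V × V → Prop) [DecidablePred P] :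
    ((X ×ˢ Y).filter P).card = ∑ x ∈ X, (Y.filter fun y => P (x, y)).card := by
  rw [Finset.card_filter, Finset.sum_product]
  exact Finset.sum_congr rfl fun x _ => (Finset.card_filter _ _).symm

lemma eBtw_comm (G : SimpleGraph V) (X Y : Finset V) : eBtw G X Y = eBtw G Y X := by
  classical
  unfold eBtw
  apply Finset.card_bij (fun a _ => (a.2, a.1))
  · rintro ⟨a, b⟩ h
    simp only [Finset.mem_filter, Finset.mem_product] at h ⊢
    exact ⟨⟨h.1.2, h.1.1⟩, h.2.symm⟩
  · rintro ⟨a, b⟩ _ ⟨c, d⟩ _ h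
    simp only [Prod.mk.injEq] at h
    simp [h.1, h.2]
  · rintro ⟨a, b⟩ h
    simp only [Finset.mem_filter, Finset.mem_product] at h
    refine ⟨(b, a), ?_, rfl⟩
    simp only [Finset.mem_filter, Finset.mem_product]
    exact ⟨⟨h.1.2, h.1.1⟩, h.2.symm⟩

lemma dens_comm (G : SimpleGraph V) (X Y : Finset V) :
    RandomTriangle.dens G X Y = RandomTriangle.dens G Y X := by
  unfold RandomTriangle.dens
  rw [eBtw_comm, mul_comm]

lemma dens_pos_facts (G : SimpleGraph V) (X Y : Finset V)
    (h : 0 < RandomTriangle.dens G X Y) :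
    0 < (X.card : ℝ) ∧ 0 < (Y.card : ℝ) ∧
      (eBtw G X Y : ℝ) = RandomTriangle.dens G X Y * ((X.card : ℝ) * (Y.card : ℝ)) := by
  have hne : ((X.card : ℝ) * (Y.card : ℝ)) ≠ 0 := by
    intro h0
    unfold RandomTriangle.dens at h
    rw [h0, div_zero] at h
    exact lt_irrefl 0 h
  have hX : (X.card : ℝ) ≠ 0 := fun h0 => hne (by rw [h0, zero_mul])
  have hY : (Y.card : ℝ) ≠ 0 := fun h0 => hne (by rw [h0, mul_zero])
  refine ⟨lt_of_le_of_ne (Nat.cast_nonneg _) (Ne.symm hX),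
    lt_of_le_of_ne (Nat.cast_nonneg _) (Ne.symm hY), ?_⟩
  unfold RandomTriangle.dens
  rw [div_mul_cancel₀ _ hne]

set_option maxHeartbeats 800000 in
/-- In a regular pair `(X, Y)`, few vertices of `Y` have low degree into `X`. -/
lemma few_low_degree (G : SimpleGraph V) (ε p : ℝ) (hε : 0 < ε) (hε1 : ε ≤ 1)
    (X Y : Finset V) (hX : 0 < (X.card : ℝ))
    (hreg : RegularPair G ε p X Y) :
    (((Y.filter fun w => ((X.filter fun x => G.Adj x w).card : ℝ) <
        (RandomTriangle.dens G X Y - ε * p) * X.card)).card : ℝ) ≤ ε * Y.card := by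
  classical
  by_contra hcon
  push_neg at hcon
  set W := Y.filter fun w => ((X.filter fun x => G.Adj x w).card : ℝ) <
      (RandomTriangle.dens G X Y - ε * p) * X.card with hWdef
  have hWsub : W ⊆ Y := Finset.filter_subset _ _
  have hWpos : 0 < (W.card : ℝ) := lt_of_le_of_lt (by positivity) hcon
  have hWne : W.Nonempty := by
    rw [← Finset.card_pos]
    exact_mod_cast hWpos
  have hXX : ε * (X.card : ℝ) ≤ (X.card : ℝ) := by
    have h0 : (0:ℝ) ≤ (X.card : ℝ) := Nat.cast_nonneg _
    have := mul_le_mul_of_nonneg_right hε1 h0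
    linarith
  have hregW := hreg X (Finset.Subset.refl X) W hWsub hXX hcon.le
  have hsum : eBtw G X W = ∑ w ∈ W, (X.filter fun x => G.Adj x w).card := by
    unfold eBtw
    rw [Finset.card_filter, Finset.sum_product_right]
    exact Finset.sum_congr rfl fun w _ => (Finset.card_filter _ _).symm
  have hlt : (eBtw G X W : ℝ) <
      (RandomTriangle.dens G X Y - ε * p) * X.card * W.card := by
    have hcast : (eBtw G X W : ℝ) = ∑ w ∈ W, ((X.filter fun x => G.Adj x w).card : ℝ) := by
      rw [hsum]
      push_cast
      rfl
    rw [hcast]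
    calc ∑ w ∈ W, ((X.filter fun x => G.Adj x w).card : ℝ)
        < ∑ _w ∈ W, (RandomTriangle.dens G X Y - ε * p) * X.card := by
          apply Finset.sum_lt_sum_of_nonempty hWne
          intro w hw
          exact (Finset.mem_filter.mp hw).2
      _ = (RandomTriangle.dens G X Y - ε * p) * X.card * W.card := by
          rw [Finset.sum_const, nsmul_eq_mul, mul_comm]
  have hdW : RandomTriangle.dens G X W < RandomTriangle.dens G X Y - ε * p := by
    have hXW : (0:ℝ) < (X.card : ℝ) * (W.card : ℝ) := mul_pos hX hWpos
    unfold RandomTriangle.dens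
    rw [div_lt_iff₀ hXW]
    calc (eBtw G X W : ℝ) < (RandomTriangle.dens G X Y - ε * p) * X.card * W.card := hlt
      _ = (RandomTriangle.dens G X Y - ε * p) * ((X.card : ℝ) * W.card) := by ring
  have habs := abs_le.mp hregW
  linarith [habs.2]

end Aux

section TypicalLemma

variable {V : Type*} [Fintype V]

set_option maxHeartbeats 1000000 in
/-- A typical vertex of `V₂` has few bad edges to `V₃`. -/
lemma typical_bad_bound (G : SimpleGraph V) (ε ε' δ p : ℝ)
    (hε : 0 < ε) (hδ : 0 < δ) (hp : 0 < p)
    (hε13 : ε < 1 / 3) (hεδ : ε < δ * (1 - 3 * ε)) (hkey : ε ≤ (ε' - 3 * ε) * δ)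
    (V₁ V₂ V₃ : Finset V) (d₁₂ d₁₃ : ℝ)
    (hd12 : RandomTriangle.dens G V₁ V₂ = d₁₂ * p)
    (hd13 : RandomTriangle.dens G V₁ V₃ = d₁₃ * p)
    (hδ12 : δ ≤ d₁₂) (hδ13 : δ ≤ d₁₃) (hm₁ : 0 < (V₁.card : ℝ))
    (u : V) (hu : TypicalVertex G ε p V₂ V₁ V₃ u) :
    (((nbhdIn G u V₃).filter fun w => ¬ GoodEdge G ε' V₁ V₂ V₃ u w).card : ℝ) ≤
      (2 * ε - ε ^ 2) * ((nbhdIn G u V₃).card : ℝ) := by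
  classical
  obtain ⟨⟨h1l, -⟩, ⟨-, -⟩, N₁', hN₁'sub, N₃', hN₃'sub, h1big, h3big, hregp, hdl, -⟩ := hu
  have hεle1 : ε ≤ 1 := by linarith
  have h1ε : (0:ℝ) < 1 - ε := by linarith
  have hd12pos : 0 < d₁₂ := lt_of_lt_of_le hδ hδ12
  have hd13pos : 0 < d₁₃ := lt_of_lt_of_le hδ hδ13
  -- |N₁| is large
  have hN1 : (1 - ε) * (d₁₂ * p * V₁.card) ≤ ((nbhdIn G u V₁).card : ℝ) := by
    rw [dens_comm, hd12] at h1l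
    exact h1l
  have hNlow : (1 - ε) * ((1 - ε) * (d₁₂ * p * V₁.card)) ≤ (N₁'.card : ℝ) :=
    le_trans (mul_le_mul_of_nonneg_left hN1 h1ε.le) h1big
  have hx : (0:ℝ) < d₁₂ * p * V₁.card := mul_pos (mul_pos hd12pos hp) hm₁
  have hN1'pos : 0 < (N₁'.card : ℝ) :=
    lt_of_lt_of_le (mul_pos h1ε (mul_pos h1ε hx)) hNlow
  -- the low-degree set W
  set W := N₃'.filter fun w => ((N₁'.filter fun x => G.Adj x w).card : ℝ) <
      (RandomTriangle.dens G N₁' N₃' - ε * p) * N₁'.card with hWdef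
  have hWcard : (W.card : ℝ) ≤ ε * N₃'.card :=
    few_low_degree G ε p hε hεle1 N₁' N₃' hN1'pos hregp
  have hdl' : (1 - ε) * (d₁₃ * p) ≤ RandomTriangle.dens G N₁' N₃' := by
    rw [← hd13]; exact hdl
  have hq : (0:ℝ) < (1 - ε) * d₁₃ - ε := arith_q_pos ε δ d₁₃ hε hδ hεδ hδ13
  have h5 : (0:ℝ) < ε' - 3 * ε :=
    arith_pos_factor (ε' - 3 * ε) δ hδ (lt_of_lt_of_le hε hkey)
  have h4 : ε ≤ (ε' - 3 * ε) * d₁₃ :=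
    le_trans hkey (mul_le_mul_of_nonneg_left hδ13 h5.le)
  have hscalar : (1 - ε') * d₁₃ ≤ (1 - ε) ^ 2 * ((1 - ε) * d₁₃ - ε) :=
    arith_scalar ε ε' d₁₃ hε hε13 hd13pos h4
  -- bad set is contained in (N₃ \ N₃') ∪ W
  have hsub : ((nbhdIn G u V₃).filter fun w => ¬ GoodEdge G ε' V₁ V₂ V₃ u w)
      ⊆ (nbhdIn G u V₃ \ N₃') ∪ W := by
    intro w hw
    obtain ⟨hwN₃, hwbad⟩ := Finset.mem_filter.mp hw
    by_cases hw3 : w ∈ N₃'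
    · refine Finset.mem_union_right _ ?_
      rw [hWdef, Finset.mem_filter]
      refine ⟨hw3, ?_⟩
      by_contra hdeg
      push_neg at hdeg
      apply hwbad
      unfold GoodEdge
      have hcodeg : ((N₁'.filter fun x => G.Adj x w).card : ℝ) ≤ (codegIn G u w V₁ : ℝ) := by
        have hss : (N₁'.filter fun x => G.Adj x w) ⊆
            V₁.filter fun x => G.Adj u x ∧ G.Adj w x := by
          intro x hxmem
          obtain ⟨hx1, hx2⟩ := Finset.mem_filter.mp hxmem
          have hx3 := hN₁'sub hx1
          obtain ⟨hxV, hxu⟩ := Finset.mem_filter.mp hx3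
          exact Finset.mem_filter.mpr ⟨hxV, hxu, hx2.symm⟩
        exact_mod_cast Finset.card_le_card hss
      have step1 : ((1 - ε) * d₁₃ - ε) * p ≤ RandomTriangle.dens G N₁' N₃' - ε * p := by
        linarith [hdl']
      have hc : (0:ℝ) ≤ (1 - ε) * ((1 - ε) * (d₁₂ * p * V₁.card)) := by
        positivity
      have hb : (0:ℝ) ≤ RandomTriangle.dens G N₁' N₃' - ε * p :=
        le_trans (mul_nonneg hq.le hp.le) step1
      have hchain : ((1 - ε) * d₁₃ - ε) * p * ((1 - ε) * ((1 - ε) * (d₁₂ * p * V₁.card)))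
          ≤ (RandomTriangle.dens G N₁' N₃' - ε * p) * N₁'.card :=
        mul_le_mul step1 hNlow hc hb
      have hmul : (0:ℝ) ≤ d₁₂ * p ^ 2 * V₁.card := by positivity
      have hfin : (1 - ε') * (RandomTriangle.dens G V₁ V₂ * RandomTriangle.dens G V₁ V₃
          * V₁.card)
          ≤ ((1 - ε) * d₁₃ - ε) * p * ((1 - ε) * ((1 - ε) * (d₁₂ * p * V₁.card))) := by
        rw [hd12, hd13]
        calc (1 - ε') * (d₁₂ * p * (d₁₃ * p) * V₁.card)
            = ((1 - ε') * d₁₃) * (d₁₂ * p ^ 2 * V₁.card) := by ring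
          _ ≤ ((1 - ε) ^ 2 * ((1 - ε) * d₁₃ - ε)) * (d₁₂ * p ^ 2 * V₁.card) :=
              mul_le_mul_of_nonneg_right hscalar hmul
          _ = ((1 - ε) * d₁₃ - ε) * p * ((1 - ε) * ((1 - ε) * (d₁₂ * p * V₁.card))) := by
              ring
      linarith
    · exact Finset.mem_union_left _ (Finset.mem_sdiff.mpr ⟨hwN₃, hw3⟩)
  -- count
  have hN₃'le : (N₃'.card : ℝ) ≤ ((nbhdIn G u V₃).card : ℝ) := by
    exact_mod_cast Finset.card_le_card hN₃'sub
  have hcard : (((nbhdIn G u V₃).filter fun w => ¬ GoodEdge G ε' V₁ V₂ V₃ u w).card : ℝ)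
      ≤ (((nbhdIn G u V₃).card : ℝ) - N₃'.card) + W.card := by
    have h1 := Finset.card_le_card hsub
    have h2 := Finset.card_union_le (nbhdIn G u V₃ \ N₃') W
    have h3 : (nbhdIn G u V₃ \ N₃').card = (nbhdIn G u V₃).card - N₃'.card :=
      Finset.card_sdiff_of_subset hN₃'sub
    have h4' := Finset.card_le_card hN₃'sub
    have h5' := le_trans h1 h2
    rw [h3] at h5'
    have h6 : (((nbhdIn G u V₃).filter fun w => ¬ GoodEdge G ε' V₁ V₂ V₃ u w).card : ℝ)
        ≤ (((nbhdIn G u V₃).card - N₃'.card : ℕ) : ℝ) + W.card := by exact_mod_cast h5'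
    rwa [Nat.cast_sub h4'] at h6
  exact arith_count ε _ _ _ _ hcard hWcard hN₃'le h3big h1ε.le

end TypicalLemma


set_option maxHeartbeats 1000000 in
/-- **Proposition (most edges are good).** In an `ε`-typical `(ε,p)`-regular triple with all
densities `d_{ij}p ≥ δp`, if `3ε + ε/δ ≤ ε'` then at most `4ε·d₂₃p|V₂||V₃|` of the edges
between `V₂` and `V₃` are not `ε'`-good. -/
theorem stmt_6 {V : Type*} [Fintype V] [DecidableEq V] (G : SimpleGraph V)
    (ε ε' δ p : ℝ) (hε : 0 < ε) (hε'pos : 0 < ε') (hδ : 0 < δ) (hp : 0 < p)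
    (hcond : 3 * ε + ε / δ ≤ ε')
    (V₁ V₂ V₃ : Finset V) (d₁₂ d₁₃ d₂₃ : ℝ)
    (h12 : Disjoint V₁ V₂) (h13 : Disjoint V₁ V₃) (h23 : Disjoint V₂ V₃)
    (htyp : TypicalTriple G ε p V₁ V₂ V₃)
    (hd12 : dens G V₁ V₂ = d₁₂ * p) (hd13 : dens G V₁ V₃ = d₁₃ * p)
    (hd23 : dens G V₂ V₃ = d₂₃ * p)
    (hδ12 : δ ≤ d₁₂) (hδ13 : δ ≤ d₁₃) (hδ23 : δ ≤ d₂₃) :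
    ((((V₂ ×ˢ V₃).filter fun uw =>
        G.Adj uw.1 uw.2 ∧ ¬ GoodEdge G ε' V₁ V₂ V₃ uw.1 uw.2).card : ℝ)) ≤
      4 * ε * d₂₃ * p * V₂.card * V₃.card := by
    classical
  have hd23pos : 0 < d₂₃ := lt_of_lt_of_le hδ hδ23
  have hd12pos : 0 < d₁₂ := lt_of_lt_of_le hδ hδ12
  have hd13pos : 0 < d₁₃ := lt_of_lt_of_le hδ hδ13
  have hdens23 : 0 < dens G V₂ V₃ := by rw [hd23]; positivity
  obtain ⟨hm₂, hm₃, he⟩ := dens_pos_facts G V₂ V₃ hdens23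
  have hE : (eBtw G V₂ V₃ : ℝ) = d₂₃ * p * ((V₂.card : ℝ) * (V₃.card : ℝ)) := by
    rw [he, hd23]
  rcases le_or_gt 1 ε' with hb | hε'1
  · -- trivial case: every edge is good
    have hempty : ((V₂ ×ˢ V₃).filter fun uw =>
        G.Adj uw.1 uw.2 ∧ ¬ GoodEdge G ε' V₁ V₂ V₃ uw.1 uw.2) = ∅ := by
      rw [Finset.filter_eq_empty_iff]
      rintro a ha ⟨-, hbad⟩
      apply hbad
      unfold GoodEdge
      have h0 : (0:ℝ) ≤ dens G V₁ V₂ * dens G V₁ V₃ * V₁.card := by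
        rw [hd12, hd13]; positivity
      have h1 : (0:ℝ) ≤ (codegIn G a.1 a.2 V₁ : ℝ) := Nat.cast_nonneg _
      exact arith_good_trivial ε' _ _ hb h0 h1
    rw [hempty]
    simp only [Finset.card_empty, Nat.cast_zero]
    positivity
  · -- main case
    have hdiv : ε / δ ≤ ε' - 3 * ε := by linarith
    have hkey : ε ≤ (ε' - 3 * ε) * δ := (div_le_iff₀ hδ).mp hdiv
    have hε13 : ε < 1 / 3 := by
      have hq := div_pos hε hδ
      linarith
    have hεδ : ε < δ * (1 - 3 * ε) := by
      have hlt : (ε' - 3 * ε) * δ < (1 - 3 * ε) * δ :=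
        mul_lt_mul_of_pos_right (by linarith) hδ
      nlinarith [hkey, hlt]
    have h1ε : (0:ℝ) ≤ 1 - ε := by linarith
    have hdens12 : 0 < dens G V₁ V₂ := by rw [hd12]; positivity
    obtain ⟨hm₁, -, -⟩ := dens_pos_facts G V₁ V₂ hdens12
    -- counting: fiberwise decomposition
    have hstep : ((V₂ ×ˢ V₃).filter fun uw =>
        G.Adj uw.1 uw.2 ∧ ¬ GoodEdge G ε' V₁ V₂ V₃ uw.1 uw.2).card
        = ∑ u ∈ V₂, ((nbhdIn G u V₃).filter fun w => ¬ GoodEdge G ε' V₁ V₂ V₃ u w).card := by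
      rw [card_filter_product]
      refine Finset.sum_congr rfl fun u _ => congrArg Finset.card ?_
      ext w
      simp [nbhdIn, Finset.mem_filter, and_assoc]
    have hgsum : ∑ u ∈ V₂, (nbhdIn G u V₃).card = eBtw G V₂ V₃ := by
      unfold eBtw
      rw [card_filter_product]
      refine Finset.sum_congr rfl fun u _ => congrArg Finset.card ?_
      ext w
      simp [nbhdIn, Finset.mem_filter]
    set T := V₂.filter fun v => TypicalVertex G ε p V₂ V₁ V₃ v with hT
    set S := V₂.filter fun v => ¬ TypicalVertex G ε p V₂ V₁ V₃ v with hS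
    have hsplitf : ∑ u ∈ V₂, ((nbhdIn G u V₃).filter
          fun w => ¬ GoodEdge G ε' V₁ V₂ V₃ u w).card
        = ∑ u ∈ T, ((nbhdIn G u V₃).filter fun w => ¬ GoodEdge G ε' V₁ V₂ V₃ u w).card
          + ∑ u ∈ S, ((nbhdIn G u V₃).filter fun w => ¬ GoodEdge G ε' V₁ V₂ V₃ u w).card :=
      (Finset.sum_filter_add_sum_filter_not V₂ _ _).symm
    have hsplitg : ∑ u ∈ V₂, (nbhdIn G u V₃).card
        = ∑ u ∈ T, (nbhdIn G u V₃).card + ∑ u ∈ S, (nbhdIn G u V₃).card :=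
      (Finset.sum_filter_add_sum_filter_not V₂ _ _).symm
    -- bound on typical vertices
    have hsumT : (∑ u ∈ T, (((nbhdIn G u V₃).filter
          fun w => ¬ GoodEdge G ε' V₁ V₂ V₃ u w).card : ℝ))
        ≤ (2 * ε - ε ^ 2) * ∑ u ∈ T, ((nbhdIn G u V₃).card : ℝ) := by
      rw [Finset.mul_sum]
      refine Finset.sum_le_sum fun u hu => ?_
      have hu' : TypicalVertex G ε p V₂ V₁ V₃ u := (Finset.mem_filter.mp hu).2
      exact typical_bad_bound G ε ε' δ p hε hδ hp hε13 hεδ hkey V₁ V₂ V₃ d₁₂ d₁₃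
        hd12 hd13 hδ12 hδ13 hm₁ u hu'
    have hsumS : (∑ u ∈ S, (((nbhdIn G u V₃).filter
          fun w => ¬ GoodEdge G ε' V₁ V₂ V₃ u w).card : ℝ))
        ≤ ∑ u ∈ S, ((nbhdIn G u V₃).card : ℝ) := by
      refine Finset.sum_le_sum fun u _ => ?_
      exact_mod_cast Finset.card_le_card (Finset.filter_subset _ _)
    -- typical vertices have large degree
    have hA : (T.card : ℝ) * ((1 - ε) * (d₂₃ * p * V₃.card))
        ≤ ∑ u ∈ T, ((nbhdIn G u V₃).card : ℝ) := by
      have hgT : ∀ u ∈ T, (1 - ε) * (d₂₃ * p * V₃.card) ≤ ((nbhdIn G u V₃).card : ℝ) := by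
        intro u hu
        have hu' : TypicalVertex G ε p V₂ V₁ V₃ u := (Finset.mem_filter.mp hu).2
        have h := hu'.2.1.1
        rwa [hd23] at h
      have := Finset.card_nsmul_le_sum T (fun u => ((nbhdIn G u V₃).card : ℝ))
        ((1 - ε) * (d₂₃ * p * V₃.card)) hgT
      rwa [nsmul_eq_mul] at this
    have hScard : (S.card : ℝ) ≤ ε * V₂.card := htyp.2.2.1
    have hTScard : (T.card : ℝ) + (S.card : ℝ) = (V₂.card : ℝ) := by
      rw [hT, hS]
      exact_mod_cast Finset.card_filter_add_card_filter_not
        (p := fun v => TypicalVertex G ε p V₂ V₁ V₃ v)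
    have hTcard : (1 - ε) * (V₂.card : ℝ) ≤ (T.card : ℝ) := by linarith
    -- assemble
    set A : ℝ := ∑ u ∈ T, ((nbhdIn G u V₃).card : ℝ) with hAdef
    set B : ℝ := ∑ u ∈ S, ((nbhdIn G u V₃).card : ℝ) with hBdef
    have hBnn : 0 ≤ B := Finset.sum_nonneg fun u _ => Nat.cast_nonneg _
    set E : ℝ := d₂₃ * p * ((V₂.card : ℝ) * (V₃.card : ℝ)) with hEdef
    have hABE : A + B = E := by
      rw [hAdef, hBdef, ← Nat.cast_sum, ← Nat.cast_sum, ← Nat.cast_add, ← hsplitg, hgsum, hE]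
    have hEnn : (0:ℝ) ≤ E := by rw [hEdef]; positivity
    have hA2 : (1 - ε) ^ 2 * E ≤ A := by
      have h1 : ((1 - ε) * V₂.card) * ((1 - ε) * (d₂₃ * p * V₃.card))
          ≤ (T.card : ℝ) * ((1 - ε) * (d₂₃ * p * V₃.card)) := by
        apply mul_le_mul_of_nonneg_right hTcard
        positivity
      calc (1 - ε) ^ 2 * E = ((1 - ε) * V₂.card) * ((1 - ε) * (d₂₃ * p * V₃.card)) := by
            rw [hEdef]; ring
        _ ≤ (T.card : ℝ) * ((1 - ε) * (d₂₃ * p * V₃.card)) := h1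
        _ ≤ A := hA
    have hbad : (((V₂ ×ˢ V₃).filter fun uw =>
        G.Adj uw.1 uw.2 ∧ ¬ GoodEdge G ε' V₁ V₂ V₃ uw.1 uw.2).card : ℝ)
        ≤ (2 * ε - ε ^ 2) * A + B := by
      rw [hstep, hsplitf]
      push_cast
      exact add_le_add hsumT hsumS
    have h1' : (1 - ε) ^ 2 * ((1 - ε) ^ 2 * E) ≤ (1 - ε) ^ 2 * A :=
      mul_le_mul_of_nonneg_left hA2 (sq_nonneg _)
    have hfinal : (2 * ε - ε ^ 2) * A + B ≤ 4 * ε * E :=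
      arith_final_s6 ε A B E hABE h1' hBnn (arith_poly ε E hEnn)
    have hgoal : (4:ℝ) * ε * E = 4 * ε * d₂₃ * p * V₂.card * V₃.card := by
      rw [hEdef]; ring
    linarith [hbad, hfinal]
end
end
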